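/- arXiv:1309.4930 — 2 statements merged into one kernel-verified Lean document; each statement's English description precedes it below -/
import Mathlib

section
/- Let W be an ε-noise channel (0 ≤ ε < 1), let n ≥ 1, and let x_1,…,x_M ∈ X^n be a blocklength-n Sperner code for W of size M ≥ 1. Then the zero-undetected-error capacity satisfies C_eo(W) ≥ (1−ε)^n · (log M)/n. In particular, for fixed support of W, liminf_{ε→0} C_eo(W) ≥ C_sp(W). -/
open scoped Classical
open Real Finset

set_option linter.unusedSectionVars false
set_option maxHeartbeats 1000000

/-- The `n`-letter extension of the channel `W`. -/
noncomputable def Wn {Y : Type*} (W : Y → Y → ℝ) (n : ℕ) (x y : Fin n → Y) : ℝ :=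
  ∏ j, W (x j) (y j)

/-- The probability of erasure given that message `m` was sent, when the codebook
`c` is used with a zero-undetected-error decoder. -/
noncomputable def erasureProb {Y : Type*} [Fintype Y] (W : Y → Y → ℝ) {n M : ℕ}
    (c : Fin M → Fin n → Y) (m : Fin M) : ℝ :=
  ∑ y ∈ Finset.univ.filter (fun y : Fin n → Y =>
      1 < (Finset.univ.filter (fun m' : Fin M => 0 < Wn W n (c m') y)).card),
    Wn W n (c m) y

/-- The zero-undetected-error capacity of the channel `W` with input alphabet
`X ⊆ Y`. -/
noncomputable def Ceo {Y : Type*} [Fintype Y] (X : Finset Y) (W : Y → Y → ℝ) : ℝ :=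
  sSup (insert 0 {R : ℝ | 0 ≤ R ∧ ∀ δ : ℝ, 0 < δ →
    ∃ (n M : ℕ) (c : Fin M → Fin n → Y), 1 ≤ n ∧ (∀ m j, c m j ∈ X) ∧
      Real.exp (n * R) ≤ (M : ℝ) ∧ ∀ m, erasureProb W c m < δ})

/-- The Sperner capacity of the channel `W` with input alphabet `X ⊆ Y`. -/
noncomputable def Csp {Y : Type*} [Fintype Y] (X : Finset Y) (W : Y → Y → ℝ) : ℝ :=
  sSup {r : ℝ | ∃ (n M : ℕ) (c : Fin M → Fin n → Y), 1 ≤ n ∧ 1 ≤ M ∧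
    (∀ m j, c m j ∈ X) ∧ (∀ m m' : Fin M, m ≠ m' → Wn W n (c m') (c m) = 0) ∧
    r = Real.log M / n}

section AuxB

variable {Z : Type*} [Fintype Z]

lemma Wn_nonneg (V : Z → Z → ℝ) {n : ℕ} {x : Fin n → Z}
    (hx : ∀ j z, 0 ≤ V (x j) z) (y : Fin n → Z) : 0 ≤ Wn V n x y :=
  Finset.prod_nonneg fun j _ => hx j _

lemma Wn_sum_one (V : Z → Z → ℝ) {n : ℕ} {x : Fin n → Z}
    (hx : ∀ j, ∑ z, V (x j) z = 1) : ∑ y : Fin n → Z, Wn V n x y = 1 := by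
  unfold Wn
  rw [← Fintype.prod_sum (fun j z => V (x j) z)]
  simp [hx]

lemma Wn_diag_le_one (V : Z → Z → ℝ) {n : ℕ} {x : Fin n → Z}
    (hx0 : ∀ j z, 0 ≤ V (x j) z) (hx1 : ∀ j, ∑ z, V (x j) z = 1) :
    Wn V n x x ≤ 1 := by
  rw [← Wn_sum_one V hx1]
  exact Finset.single_le_sum (fun y _ => Wn_nonneg V hx0 y) (Finset.mem_univ x)

lemma erasureProb_nonneg (V : Z → Z → ℝ) {n M : ℕ} (c : Fin M → Fin n → Z)
    (h0 : ∀ m y, 0 ≤ Wn V n (c m) y) (m : Fin M) : 0 ≤ erasureProb V c m :=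
  Finset.sum_nonneg fun y _ => h0 m y

lemma erasureProb_comp_le (V : Z → Z → ℝ) {n M₁ M₂ : ℕ} (c : Fin M₂ → Fin n → Z)
    (h0 : ∀ m y, 0 ≤ Wn V n (c m) y) (g : Fin M₁ → Fin M₂)
    (hg : Function.Injective g) (m : Fin M₁) :
    erasureProb V (c ∘ g) m ≤ erasureProb V c (g m) := by
  unfold erasureProb
  apply Finset.sum_le_sum_of_subset_of_nonneg
  · intro y hy
    simp only [Finset.mem_filter, Finset.mem_univ, true_and] at hy ⊢
    refine lt_of_lt_of_le hy ?_
    apply Finset.card_le_card_of_injOn g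
    · intro m' hm'
      simp only [Finset.mem_coe, Finset.mem_filter, Finset.mem_univ, true_and] at hm' ⊢
      exact hm'
    · exact hg.injOn
  · intro y _ _
    exact h0 _ y

lemma min_one_le_rpow {x ρ : ℝ} (hx : 0 ≤ x) (h0 : 0 < ρ) (h1 : ρ ≤ 1) :
    min 1 x ≤ x ^ ρ := by
  rcases eq_or_lt_of_le hx with h | h
  · rw [← h, Real.zero_rpow (ne_of_gt h0)]
    simp
  rcases le_or_gt 1 x with hx1 | hx1
  · rw [min_eq_left hx1]
    calc (1:ℝ) = 1 ^ ρ := (Real.one_rpow ρ).symm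
    _ ≤ x ^ ρ := Real.rpow_le_rpow zero_le_one hx1 h0.le
  · refine le_trans (min_le_right _ _) ?_
    calc x = x ^ (1:ℝ) := (Real.rpow_one x).symm
    _ ≤ x ^ ρ := Real.rpow_le_rpow_of_exponent_ge h hx1.le h1

def splitEquiv {α V : Type*} [DecidableEq α] (i : α) :
    (V × ({ j // j ≠ i } → V)) ≃ (α → V) where
  toFun f j := if h : j = i then f.1 else f.2 ⟨j, h⟩
  invFun u := (u i, fun j => u j.1)
  left_inv f := by
    refine Prod.ext ?_ ?_
    · simp
    · funext j
      simp [j.2]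
  right_inv u := by
    funext j
    by_cases h : j = i
    · subst h; simp
    · simp [h]

lemma sum_split {α V : Type*} [Fintype α] [DecidableEq α] [Fintype V] (i : α)
    (f : (α → V) → ℝ) :
    ∑ u : α → V, f u
      = ∑ v : V, ∑ w : { j // j ≠ i } → V,
          f (fun j => if h : j = i then v else w ⟨j, h⟩) := by
  rw [← Equiv.sum_comp (splitEquiv (V := V) i) f, Fintype.sum_prod_type]
  rfl

lemma card_ne_eq {α : Type*} [Fintype α] [DecidableEq α] (i : α) :
    Fintype.card { j // j ≠ i } = Fintype.card α - 1 := by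
  have := Fintype.card_subtype_compl (fun j : α => j = i)
  rwa [Fintype.card_subtype_eq] at this

lemma sum_eval {α V : Type*} [Fintype α] [DecidableEq α] [Fintype V] (i : α)
    (g : V → ℝ) :
    ∑ u : α → V, g (u i)
      = (Fintype.card V : ℝ) ^ (Fintype.card α - 1) * ∑ v, g v := by
  rw [sum_split i (f := fun u => g (u i))]
  have h : ∀ v : V, ∑ _w : { j // j ≠ i } → V, g v
      = (Fintype.card V : ℝ) ^ (Fintype.card α - 1) * g v := by
    intro v
    rw [Finset.sum_const, Finset.card_univ, Fintype.card_fun, card_ne_eq,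
      nsmul_eq_mul]
    push_cast
    ring
  calc ∑ v : V, ∑ w : { j // j ≠ i } → V,
        g (if h : i = i then v else w ⟨i, h⟩)
      = ∑ v : V, ∑ _w : { j // j ≠ i } → V, g v := by
        apply Finset.sum_congr rfl
        intro v _
        apply Finset.sum_congr rfl
        intro w _
        rw [dif_pos rfl]
    _ = ∑ v : V, (Fintype.card V : ℝ) ^ (Fintype.card α - 1) * g v := by
        simp [h]
    _ = _ := by rw [← Finset.mul_sum]

end AuxB

section Transport

variable {Y : Type*} [Fintype Y]

lemma Wn_pos_iff (V : Y → Y → ℝ) {n : ℕ} {x : Fin n → Y}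
    (hx : ∀ j z, 0 ≤ V (x j) z) (y : Fin n → Y) :
    0 < Wn V n x y ↔ ∀ j, 0 < V (x j) (y j) := by
  constructor
  · intro h j
    rcases (hx j (y j)).lt_or_eq with h' | h'
    · exact h'
    · exfalso
      have : Wn V n x y = 0 := Finset.prod_eq_zero (Finset.mem_univ j) h'.symm
      rw [this] at h
      exact lt_irrefl 0 h
  · intro h
    exact Finset.prod_pos fun j _ => h j

def flatEquiv (k n : ℕ) : (Fin k → Fin n → Y) ≃ (Fin (k * n) → Y) where
  toFun x i := x (finProdFinEquiv.symm i).1 (finProdFinEquiv.symm i).2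
  invFun y a b := y (finProdFinEquiv (a, b))
  left_inv x := by
    funext a b
    simp
  right_inv y := by
    funext i
    show y (finProdFinEquiv ((finProdFinEquiv.symm i).1, (finProdFinEquiv.symm i).2)) = y i
    rw [Prod.mk.eta, Equiv.apply_symm_apply]

lemma Wn_flat (W : Y → Y → ℝ) (k n : ℕ) (x y : Fin k → Fin n → Y) :
    Wn W (k * n) (flatEquiv k n x) (flatEquiv k n y) = Wn (Wn W n) k x y := by
  unfold Wn
  calc ∏ i : Fin (k * n), W (flatEquiv k n x i) (flatEquiv k n y i)
      = ∏ p : Fin k × Fin n, W (flatEquiv k n x (finProdFinEquiv p))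
          (flatEquiv k n y (finProdFinEquiv p)) :=
        (Equiv.prod_comp finProdFinEquiv _).symm
    _ = ∏ p : Fin k × Fin n, W (x p.1 p.2) (y p.1 p.2) := by
        apply Finset.prod_congr rfl
        intro p _
        show W (x (finProdFinEquiv.symm (finProdFinEquiv p)).1
            (finProdFinEquiv.symm (finProdFinEquiv p)).2)
          (y (finProdFinEquiv.symm (finProdFinEquiv p)).1
            (finProdFinEquiv.symm (finProdFinEquiv p)).2) = W (x p.1 p.2) (y p.1 p.2)
        rw [Equiv.symm_apply_apply]
    _ = ∏ a : Fin k, ∏ b : Fin n, W (x a b) (y a b) := Fintype.prod_prod_type _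
end Transport

section Transport2
variable {Y : Type*} [Fintype Y]

lemma erasure_flat (W : Y → Y → ℝ) (k n K : ℕ) (d : Fin K → Fin k → Fin n → Y)
    (m : Fin K) :
    erasureProb W (fun i => flatEquiv k n (d i)) m = erasureProb (Wn W n) d m := by
  unfold erasureProb
  rw [Finset.sum_filter, Finset.sum_filter,
    ← Equiv.sum_comp (flatEquiv (Y := Y) k n)]
  apply Finset.sum_congr rfl
  intro yb _
  have hW : ∀ i : Fin K,
      Wn W (k * n) (flatEquiv k n (d i)) (flatEquiv k n yb) = Wn (Wn W n) k (d i) yb :=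
    fun i => Wn_flat W k n (d i) yb
  simp only [hW]
end Transport2
section CoreL
variable {Z : Type*} [Fintype Z]

lemma Wn_eq_prod {Y : Type*} (V : Y → Y → ℝ) (n : ℕ) (x y : Fin n → Y) :
    Wn V n x y = ∏ j, V (x j) (y j) := rfl

lemma core (V : Z → Z → ℝ) {M : ℕ} (hM : 1 ≤ M) (cb : Fin M → Z)
    (hnn : ∀ (a : Fin M) (z : Z), 0 ≤ V (cb a) z)
    (hsum : ∀ a, ∑ z, V (cb a) z = 1)
    {p : ℝ} (hp0 : 0 < p)
    (hdiag : ∀ a, p ≤ V (cb a) (cb a))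
    (hSp : ∀ a b : Fin M, a ≠ b → V (cb b) (cb a) = 0)
    {ρ θ : ℝ} (hρ0 : 0 < ρ) (hρ1 : ρ ≤ 1) (hθ : θ = (M : ℝ) ^ (-ρ))
    (k K : ℕ) (hK : 2 ≤ K) :
    ∃ u : Fin K → Fin k → Fin M,
      ∑ m : Fin K, erasureProb V (fun i => cb ∘ u i) m ≤
        (K : ℝ) * ((K : ℝ) ^ ρ * (1 - p + p * θ) ^ k) := by
  have hM0 : (0 : ℝ) < M := by exact_mod_cast hM
  have hθ0 : 0 ≤ θ := by rw [hθ]; positivity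
  have hθ1 : θ ≤ 1 := by
    rw [hθ]
    exact Real.rpow_le_one_of_one_le_of_nonpos (by exact_mod_cast hM) (by linarith)
  have hdle : ∀ a, V (cb a) (cb a) ≤ 1 := fun a => by
    calc V (cb a) (cb a) ≤ ∑ z, V (cb a) z :=
          Finset.single_le_sum (fun z _ => hnn a z) (Finset.mem_univ (cb a))
      _ = 1 := hsum a
  have hlettereq : ∀ a, (∑ z : Z, V (cb a) z * (if z = cb a then θ else 1))
      = 1 + (θ - 1) * V (cb a) (cb a) := by
    intro a
    have h1 : ∀ z : Z, V (cb a) z * (if z = cb a then θ else 1)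
        = V (cb a) z + (if z = cb a then (θ - 1) * V (cb a) z else 0) := by
      intro z; split_ifs <;> ring
    rw [Finset.sum_congr rfl fun z _ => h1 z, Finset.sum_add_distrib, hsum a,
      Finset.sum_ite_eq' Finset.univ (cb a) (fun z => (θ - 1) * V (cb a) z)]
    simp
  have hletter_le : ∀ a, (∑ z : Z, V (cb a) z * (if z = cb a then θ else 1))
      ≤ 1 - p + p * θ := by
    intro a; rw [hlettereq a]; nlinarith [hdiag a, hdle a]
  have hletter_nn : ∀ a, 0 ≤ ∑ z : Z, V (cb a) z * (if z = cb a then θ else 1) := by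
    intro a; rw [hlettereq a]; nlinarith [hdle a, hnn a (cb a)]
  have hWBnn : ∀ (v : Fin k → Fin M) (y : Fin k → Z), 0 ≤ Wn V k (cb ∘ v) y :=
    fun v y => Finset.prod_nonneg fun a _ => hnn _ _
  set A : Z → ℝ := fun z => ((Finset.univ.filter fun b : Fin M => 0 < V (cb b) z).card : ℝ)
    with hA
  have hA0 : ∀ z, 0 ≤ A z := fun z => Nat.cast_nonneg _
  have hAM : ∀ z, A z ≤ M := by
    intro z
    show ((Finset.univ.filter fun b : Fin M => 0 < V (cb b) z).card : ℝ) ≤ (M : ℝ)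
    have := Finset.card_filter_le (Finset.univ : Finset (Fin M)) (fun b => 0 < V (cb b) z)
    simp only [Finset.card_univ, Fintype.card_fin] at this
    exact_mod_cast this
  have hAclean : ∀ b : Fin M, A (cb b) ≤ 1 := by
    intro b
    show ((Finset.univ.filter fun a : Fin M => 0 < V (cb a) (cb b)).card : ℝ) ≤ 1
    have hsub : (Finset.univ.filter fun a : Fin M => 0 < V (cb a) (cb b)) ⊆ {b} := by
      intro a ha
      simp only [Finset.mem_filter, Finset.mem_univ, true_and] at ha
      simp only [Finset.mem_singleton]
      by_contra hne
      rw [hSp b a (fun h => hne h.symm)] at ha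
      exact lt_irrefl 0 ha
    have := Finset.card_le_card hsub
    simp only [Finset.card_singleton] at this
    exact_mod_cast this
  have hcompat_ind : ∀ (v' : Fin k → Fin M) (y : Fin k → Z),
      (if 0 < Wn V k (cb ∘ v') y then (1 : ℝ) else 0)
        = ∏ a, (if 0 < V (cb (v' a)) (y a) then (1 : ℝ) else 0) := by
    intro v' y
    by_cases h : 0 < Wn V k (cb ∘ v') y
    · rw [if_pos h, eq_comm]
      apply Finset.prod_eq_one
      intro a _
      rw [if_pos (((Wn_pos_iff V (fun j z => hnn (v' j) z) y).1 h) a)]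
    · rw [if_neg h]
      have h0 : Wn V k (cb ∘ v') y = 0 := le_antisymm (not_lt.1 h) (hWBnn v' y)
      rw [Wn_eq_prod] at h0
      obtain ⟨a, -, ha⟩ := Finset.prod_eq_zero_iff.1 h0
      rw [eq_comm]
      apply Finset.prod_eq_zero (Finset.mem_univ a)
      rw [if_neg]
      show ¬0 < V (cb (v' a)) (y a)
      rw [show V (cb (v' a)) (y a) = 0 from ha]
      exact lt_irrefl 0
  have hT : ∀ y : Fin k → Z,
      (∑ v' : Fin k → Fin M, if 0 < Wn V k (cb ∘ v') y then (1 : ℝ) else 0)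
        = ∏ a, A (y a) := by
    intro y
    rw [Finset.sum_congr rfl fun v' _ => hcompat_ind v' y,
      ← Fintype.prod_sum (fun a b => if 0 < V (cb b) (y a) then (1 : ℝ) else 0)]
    apply Finset.prod_congr rfl
    intro a _
    rw [hA]
    simp
  have hfubini : ∀ v : Fin k → Fin M,
      (∑ y : Fin k → Z, Wn V k (cb ∘ v) y * ∏ a, (if y a = cb (v a) then θ else 1))
        = ∏ a, ∑ z : Z, V (cb (v a)) z * (if z = cb (v a) then θ else 1) := by
    intro v
    rw [Fintype.prod_sum (fun a z => V (cb (v a)) z * (if z = cb (v a) then θ else 1))]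
    apply Finset.sum_congr rfl
    intro y _
    rw [Wn_eq_prod, ← Finset.prod_mul_distrib]
    rfl
  -- step 1
  have step1 : ∀ (u : Fin K → Fin k → Fin M) (m : Fin K),
      erasureProb V (fun i => cb ∘ u i) m ≤
        ∑ y : Fin k → Z, Wn V k (cb ∘ u m) y *
          (if ∃ m', m' ≠ m ∧ 0 < Wn V k (cb ∘ u m') y then (1 : ℝ) else 0) := by
    intro u m
    unfold erasureProb
    rw [Finset.sum_filter]
    apply Finset.sum_le_sum
    intro y _
    split_ifs with h1 h2
    · exact le_of_eq (mul_one _).symm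
    · exfalso
      apply h2
      obtain ⟨a, ha, b, hb, hab⟩ := Finset.one_lt_card.1 h1
      simp only [Finset.mem_filter, Finset.mem_univ, true_and] at ha hb
      by_cases ham : a = m
      · exact ⟨b, fun h' => hab (by rw [h', ham]), hb⟩
      · exact ⟨a, ham, ha⟩
    · exact mul_nonneg (hWBnn (u m) y) (by norm_num)
    · simp
  -- step 2
  have step2 : ∀ m : Fin K,
      (∑ u : Fin K → Fin k → Fin M, ∑ y : Fin k → Z, Wn V k (cb ∘ u m) y *
          (if ∃ m', m' ≠ m ∧ 0 < Wn V k (cb ∘ u m') y then (1 : ℝ) else 0))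
        ≤ (Fintype.card (Fin K → Fin k → Fin M) : ℝ) *
            ((K : ℝ) ^ ρ * (1 - p + p * θ) ^ k) := by
    intro m
    rw [sum_split m]
    have hclean : ∀ (v : Fin k → Fin M) (w : { j : Fin K // j ≠ m } → Fin k → Fin M),
        (∑ y : Fin k → Z,
          Wn V k (cb ∘ (fun j => if h : j = m then v else w ⟨j, h⟩) m) y *
          (if ∃ m', m' ≠ m ∧
              0 < Wn V k (cb ∘ (fun j => if h : j = m then v else w ⟨j, h⟩) m') y
            then (1 : ℝ) else 0))
        = ∑ y : Fin k → Z, Wn V k (cb ∘ v) y *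
            (if ∃ j : { j : Fin K // j ≠ m }, 0 < Wn V k (cb ∘ w j) y
              then (1 : ℝ) else 0) := by
      intro v w
      apply Finset.sum_congr rfl
      intro y _
      have h1 : (fun j => if h : j = m then v else w ⟨j, h⟩) m = v := dif_pos rfl
      rw [h1]
      congr 1
      apply if_congr _ rfl rfl
      constructor
      · rintro ⟨m', hne, hpos⟩
        refine ⟨⟨m', hne⟩, ?_⟩
        have h2 : (fun j => if h : j = m then v else w ⟨j, h⟩) m' = w ⟨m', hne⟩ :=
          dif_neg hne
        rwa [h2] at hpos
      · rintro ⟨j, hpos⟩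
        refine ⟨j.1, j.2, ?_⟩
        have h2 : (fun j' => if h : j' = m then v else w ⟨j', h⟩) j.1 = w j :=
          dif_neg j.2
        rw [h2]
        exact hpos
    refine le_trans (le_of_eq (Finset.sum_congr rfl fun v _ =>
      Finset.sum_congr rfl fun w _ => hclean v w)) ?_
    -- key bound for fixed v
    have key : ∀ v : Fin k → Fin M,
        (∑ w : { j : Fin K // j ≠ m } → Fin k → Fin M, ∑ y : Fin k → Z,
          Wn V k (cb ∘ v) y *
            (if ∃ j : { j : Fin K // j ≠ m }, 0 < Wn V k (cb ∘ w j) y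
              then (1 : ℝ) else 0))
        ≤ (Fintype.card ({ j : Fin K // j ≠ m } → Fin k → Fin M) : ℝ) *
            ((K : ℝ) ^ ρ * (1 - p + p * θ) ^ k) := by
      intro v
      rw [Finset.sum_comm]
      set T : (Fin k → Z) → ℝ := fun y => ∏ a, A (y a) with hTdef
      have hTnn : ∀ y, 0 ≤ T y := fun y => Finset.prod_nonneg fun a _ => hA0 _
      set Mk : ℝ := (M : ℝ) ^ k with hMk
      have hMk0 : 0 < Mk := by rw [hMk]; positivity
      set κ := Fintype.card { j : Fin K // j ≠ m } with hκdef
      have hκ : κ = K - 1 := by rw [hκdef, card_ne_eq, Fintype.card_fin]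
      have hκ1 : 1 ≤ κ := by omega
      set D : ℝ := (Fintype.card ({ j : Fin K // j ≠ m } → Fin k → Fin M) : ℝ) with hDdef
      have hcardV : (Fintype.card (Fin k → Fin M) : ℝ) = Mk := by
        rw [Fintype.card_fun, Fintype.card_fin, Fintype.card_fin, hMk]
        push_cast
        rfl
      have hDval : D = Mk ^ κ := by
        rw [hDdef, Fintype.card_fun]
        push_cast
        rw [hcardV]
      have hD0 : 0 ≤ D := Nat.cast_nonneg _
      have hwsum : ∀ y : Fin k → Z,
          (∑ w : { j : Fin K // j ≠ m } → Fin k → Fin M,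
            (if ∃ j : { j : Fin K // j ≠ m }, 0 < Wn V k (cb ∘ w j) y
              then (1 : ℝ) else 0))
          ≤ D * ((K : ℝ) ^ ρ * ∏ a, (if y a = cb (v a) then θ else 1)) := by
        intro y
        have hb1 : (∑ w : { j : Fin K // j ≠ m } → Fin k → Fin M,
            (if ∃ j : { j : Fin K // j ≠ m }, 0 < Wn V k (cb ∘ w j) y
              then (1 : ℝ) else 0)) ≤ D := by
          calc (∑ w : { j : Fin K // j ≠ m } → Fin k → Fin M,
              (if ∃ j : { j : Fin K // j ≠ m }, 0 < Wn V k (cb ∘ w j) y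
                then (1 : ℝ) else 0))
              ≤ ∑ _w : { j : Fin K // j ≠ m } → Fin k → Fin M, (1 : ℝ) :=
                Finset.sum_le_sum (fun w _ => by split_ifs <;> norm_num)
            _ = D := by
                rw [Finset.sum_const, Finset.card_univ, nsmul_eq_mul, mul_one, hDdef]
        have hb2 : (∑ w : { j : Fin K // j ≠ m } → Fin k → Fin M,
            (if ∃ j : { j : Fin K // j ≠ m }, 0 < Wn V k (cb ∘ w j) y
              then (1 : ℝ) else 0))
            ≤ (κ : ℝ) * (Mk ^ (κ - 1) * T y) := by
          calc (∑ w : { j : Fin K // j ≠ m } → Fin k → Fin M,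
              (if ∃ j : { j : Fin K // j ≠ m }, 0 < Wn V k (cb ∘ w j) y
                then (1 : ℝ) else 0))
              ≤ ∑ w : { j : Fin K // j ≠ m } → Fin k → Fin M,
                  ∑ j : { j : Fin K // j ≠ m },
                    (if 0 < Wn V k (cb ∘ w j) y then (1 : ℝ) else 0) := by
                apply Finset.sum_le_sum
                intro w _
                by_cases h : ∃ j : { j : Fin K // j ≠ m }, 0 < Wn V k (cb ∘ w j) y
                · rw [if_pos h]
                  obtain ⟨j0, hj0⟩ := h
                  calc (1 : ℝ) = if 0 < Wn V k (cb ∘ w j0) y then (1 : ℝ) else 0 :=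
                        (if_pos hj0).symm
                    _ ≤ _ := Finset.single_le_sum
                        (f := fun j : { j : Fin K // j ≠ m } =>
                          if 0 < Wn V k (cb ∘ w j) y then (1 : ℝ) else 0)
                        (fun j _ => by split_ifs <;> norm_num)
                        (Finset.mem_univ j0)
                · rw [if_neg h]
                  exact Finset.sum_nonneg fun j _ => by split_ifs <;> norm_num
            _ = ∑ j : { j : Fin K // j ≠ m },
                  ∑ w : { j : Fin K // j ≠ m } → Fin k → Fin M,
                    (if 0 < Wn V k (cb ∘ w j) y then (1 : ℝ) else 0) :=
                Finset.sum_comm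
            _ = ∑ _j : { j : Fin K // j ≠ m },
                  (Fintype.card (Fin k → Fin M) : ℝ) ^ (κ - 1) *
                    ∑ v' : Fin k → Fin M,
                      (if 0 < Wn V k (cb ∘ v') y then (1 : ℝ) else 0) := by
                apply Finset.sum_congr rfl
                intro j _
                exact sum_eval j
                  (fun v' => if 0 < Wn V k (cb ∘ v') y then (1 : ℝ) else 0)
            _ = (κ : ℝ) * (Mk ^ (κ - 1) * T y) := by
                rw [hT y, hcardV, Finset.sum_const, Finset.card_univ, nsmul_eq_mul,
                  ← hκdef, hTdef]
        have hmin : (∑ w : { j : Fin K // j ≠ m } → Fin k → Fin M,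
            (if ∃ j : { j : Fin K // j ≠ m }, 0 < Wn V k (cb ∘ w j) y
              then (1 : ℝ) else 0))
            ≤ D * min 1 ((K : ℝ) * T y / Mk) := by
          rcases le_total 1 ((K : ℝ) * T y / Mk) with h | h
          · rw [min_eq_left h, mul_one]; exact hb1
          · rw [min_eq_right h]
            refine hb2.trans ?_
            rw [hDval]
            have hκκ : Mk ^ κ = Mk ^ (κ - 1) * Mk := by
              rw [← pow_succ]
              congr 1
              omega
            rw [hκκ]
            have heq : Mk ^ (κ - 1) * Mk * ((K : ℝ) * T y / Mk)
                = (K : ℝ) * (Mk ^ (κ - 1) * T y) := by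
              field_simp
            rw [heq]
            apply mul_le_mul_of_nonneg_right
            · exact_mod_cast Nat.cast_le.mpr (by omega : κ ≤ K)
            · exact mul_nonneg (pow_nonneg hMk0.le _) (hTnn y)
        have hrpow : min 1 ((K : ℝ) * T y / Mk)
            ≤ (K : ℝ) ^ ρ * ∏ a, (if y a = cb (v a) then θ else 1) := by
          have hx0 : 0 ≤ (K : ℝ) * T y / Mk :=
            div_nonneg (mul_nonneg (Nat.cast_nonneg K) (hTnn y)) hMk0.le
          refine (min_one_le_rpow hx0 hρ0 hρ1).trans ?_
          have h1 : (K : ℝ) * T y / Mk = (K : ℝ) * ∏ a, (A (y a) / M) := by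
            rw [hTdef, Finset.prod_div_distrib, Finset.prod_const, Finset.card_univ,
              Fintype.card_fin, hMk]
            ring
          rw [h1, Real.mul_rpow (Nat.cast_nonneg K)
            (Finset.prod_nonneg fun a _ => div_nonneg (hA0 _) hM0.le)]
          apply mul_le_mul_of_nonneg_left ?_ (Real.rpow_nonneg (Nat.cast_nonneg K) ρ)
          rw [← Real.finset_prod_rpow _ _ (fun a _ => div_nonneg (hA0 _) hM0.le) ρ]
          apply Finset.prod_le_prod
            (fun a _ => Real.rpow_nonneg (div_nonneg (hA0 _) hM0.le) ρ)
          intro a _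
          by_cases hcl : y a = cb (v a)
          · rw [if_pos hcl, hθ, hcl]
            calc (A (cb (v a)) / M) ^ ρ ≤ ((1 : ℝ) / M) ^ ρ := by
                  apply Real.rpow_le_rpow (div_nonneg (hA0 _) hM0.le) _ hρ0.le
                  gcongr
                  exact hAclean (v a)
              _ = (M : ℝ) ^ (-ρ) := by
                  rw [one_div, Real.inv_rpow hM0.le, ← Real.rpow_neg hM0.le]
          · rw [if_neg hcl]
            exact Real.rpow_le_one (div_nonneg (hA0 _) hM0.le)
              ((div_le_one hM0).mpr (hAM _)) hρ0.le
        calc (∑ w : { j : Fin K // j ≠ m } → Fin k → Fin M,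
            (if ∃ j : { j : Fin K // j ≠ m }, 0 < Wn V k (cb ∘ w j) y
              then (1 : ℝ) else 0))
            ≤ D * min 1 ((K : ℝ) * T y / Mk) := hmin
          _ ≤ D * ((K : ℝ) ^ ρ * ∏ a, (if y a = cb (v a) then θ else 1)) :=
              mul_le_mul_of_nonneg_left hrpow hD0
      calc (∑ y : Fin k → Z, ∑ w : { j : Fin K // j ≠ m } → Fin k → Fin M,
            Wn V k (cb ∘ v) y *
              (if ∃ j : { j : Fin K // j ≠ m }, 0 < Wn V k (cb ∘ w j) y
                then (1 : ℝ) else 0))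
          ≤ ∑ y : Fin k → Z, D * (K : ℝ) ^ ρ *
              (Wn V k (cb ∘ v) y * ∏ a, (if y a = cb (v a) then θ else 1)) := by
            apply Finset.sum_le_sum
            intro y _
            rw [← Finset.mul_sum]
            calc Wn V k (cb ∘ v) y *
                (∑ w : { j : Fin K // j ≠ m } → Fin k → Fin M,
                  (if ∃ j : { j : Fin K // j ≠ m }, 0 < Wn V k (cb ∘ w j) y
                    then (1 : ℝ) else 0))
                ≤ Wn V k (cb ∘ v) y *
                  (D * ((K : ℝ) ^ ρ * ∏ a, (if y a = cb (v a) then θ else 1))) :=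
                  mul_le_mul_of_nonneg_left (hwsum y) (hWBnn v y)
              _ = D * (K : ℝ) ^ ρ *
                  (Wn V k (cb ∘ v) y * ∏ a, (if y a = cb (v a) then θ else 1)) := by
                  ring
        _ = D * (K : ℝ) ^ ρ *
            (∑ y : Fin k → Z, Wn V k (cb ∘ v) y *
              ∏ a, (if y a = cb (v a) then θ else 1)) := by
            rw [← Finset.mul_sum]
        _ = D * (K : ℝ) ^ ρ *
            ∏ a, ∑ z : Z, V (cb (v a)) z * (if z = cb (v a) then θ else 1) := by
            rw [hfubini v]
        _ ≤ D * (K : ℝ) ^ ρ * (1 - p + p * θ) ^ k := by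
            apply mul_le_mul_of_nonneg_left
            · calc (∏ a : Fin k, ∑ z : Z, V (cb (v a)) z * (if z = cb (v a) then θ else 1))
                  ≤ ∏ _a : Fin k, (1 - p + p * θ) :=
                    Finset.prod_le_prod (fun a _ => hletter_nn _) (fun a _ => hletter_le _)
                _ = (1 - p + p * θ) ^ k := by
                    rw [Finset.prod_const, Finset.card_univ, Fintype.card_fin]
            · exact mul_nonneg hD0 (Real.rpow_nonneg (Nat.cast_nonneg K) ρ)
        _ = (Fintype.card ({ j : Fin K // j ≠ m } → Fin k → Fin M) : ℝ) *
            ((K : ℝ) ^ ρ * (1 - p + p * θ) ^ k) := by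
            rw [hDdef]
            ring
    refine le_trans (Finset.sum_le_sum fun v _ => key v) ?_
    rw [Finset.sum_const, Finset.card_univ, nsmul_eq_mul]
    apply le_of_eq
    have hcard1 : Fintype.card (Fin K → Fin k → Fin M) = (M ^ k) ^ K := by
      rw [Fintype.card_fun, Fintype.card_fun, Fintype.card_fin, Fintype.card_fin,
        Fintype.card_fin]
    have hcard2 : Fintype.card ({ j : Fin K // j ≠ m } → Fin k → Fin M)
        = (M ^ k) ^ (K - 1) := by
      rw [Fintype.card_fun, Fintype.card_fun, Fintype.card_fin, Fintype.card_fin,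
        card_ne_eq, Fintype.card_fin]
    have hcard3 : Fintype.card (Fin k → Fin M) = M ^ k := by
      rw [Fintype.card_fun, Fintype.card_fin, Fintype.card_fin]
    rw [hcard1, hcard2, hcard3]
    push_cast
    rw [show ((M : ℝ) ^ k) ^ K = ((M : ℝ) ^ k) ^ (K - 1) * ((M : ℝ) ^ k) from by
      rw [← pow_succ]; congr 1; omega]
    ring
  -- combine
  have hNE : Nonempty (Fin k → Fin M) := ⟨fun _ => ⟨0, hM⟩⟩
  have htotal : (∑ u : Fin K → Fin k → Fin M, ∑ m : Fin K,
      ∑ y : Fin k → Z, Wn V k (cb ∘ u m) y *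
        (if ∃ m', m' ≠ m ∧ 0 < Wn V k (cb ∘ u m') y then (1 : ℝ) else 0))
      ≤ ∑ _u : Fin K → Fin k → Fin M,
          (K : ℝ) * ((K : ℝ) ^ ρ * (1 - p + p * θ) ^ k) := by
    calc (∑ u : Fin K → Fin k → Fin M, ∑ m : Fin K,
        ∑ y : Fin k → Z, Wn V k (cb ∘ u m) y *
          (if ∃ m', m' ≠ m ∧ 0 < Wn V k (cb ∘ u m') y then (1 : ℝ) else 0))
        = ∑ m : Fin K, ∑ u : Fin K → Fin k → Fin M,
            ∑ y : Fin k → Z, Wn V k (cb ∘ u m) y *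
              (if ∃ m', m' ≠ m ∧ 0 < Wn V k (cb ∘ u m') y then (1 : ℝ) else 0) :=
          Finset.sum_comm
      _ ≤ ∑ _m : Fin K, (Fintype.card (Fin K → Fin k → Fin M) : ℝ) *
            ((K : ℝ) ^ ρ * (1 - p + p * θ) ^ k) :=
          Finset.sum_le_sum fun m _ => step2 m
      _ = ∑ _u : Fin K → Fin k → Fin M,
            (K : ℝ) * ((K : ℝ) ^ ρ * (1 - p + p * θ) ^ k) := by
          rw [Finset.sum_const, Finset.sum_const, Finset.card_univ, Finset.card_univ,
            Fintype.card_fin, nsmul_eq_mul, nsmul_eq_mul]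
          ring
  obtain ⟨u, -, hu⟩ := Finset.exists_le_of_sum_le Finset.univ_nonempty htotal
  exact ⟨u, le_trans (Finset.sum_le_sum fun m _ => step1 u m) hu⟩

end CoreL

section PartOne

variable {Y : Type*} [Fintype Y]

lemma ceoSet_bddAbove (X : Finset Y) (hX : X.Nonempty) (W : Y → Y → ℝ)
    (hW0 : ∀ x ∈ X, ∀ y, 0 ≤ W x y) (hW1 : ∀ x ∈ X, ∑ y, W x y = 1) :
    BddAbove (insert 0 {R : ℝ | 0 ≤ R ∧ ∀ δ : ℝ, 0 < δ →
      ∃ (n M : ℕ) (c : Fin M → Fin n → Y), 1 ≤ n ∧ (∀ m j, c m j ∈ X) ∧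
        Real.exp (n * R) ≤ (M : ℝ) ∧ ∀ m, erasureProb W c m < δ}) := by
  have hYne : Nonempty Y := ⟨hX.choose⟩
  have hY : 0 < Fintype.card Y := Fintype.card_pos_iff.mpr hYne
  refine ⟨Real.log (Fintype.card Y), ?_⟩
  rintro r (rfl | ⟨hr0, hach⟩)
  · exact Real.log_nonneg (by exact_mod_cast hY)
  obtain ⟨n', M', c', hn', hcX, hexp, her⟩ := hach 1 one_pos
  have hinj : Function.Injective c' := by
    intro m₀ m₁ hEq
    by_contra hne
    have hsum1 : ∑ y : Fin n' → Y, Wn W n' (c' m₀) y = 1 :=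
      Wn_sum_one W (fun j => hW1 _ (hcX m₀ j))
    have hsub : ∀ y : Fin n' → Y, 0 < Wn W n' (c' m₀) y →
        1 < (Finset.univ.filter fun m' : Fin M' => 0 < Wn W n' (c' m') y).card := by
      intro y hy
      apply Finset.one_lt_card.2
      refine ⟨m₀, ?_, m₁, ?_, hne⟩ <;>
        simp only [Finset.mem_filter, Finset.mem_univ, true_and]
      · exact hy
      · rw [← hEq]; exact hy
    have hEqsum : erasureProb W c' m₀ = 1 := by
      unfold erasureProb
      rw [← hsum1]
      apply Finset.sum_subset (Finset.filter_subset _ _)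
      intro y _ hy
      by_contra h0
      have hpos : 0 < Wn W n' (c' m₀) y :=
        lt_of_le_of_ne (Wn_nonneg W (fun j z => hW0 _ (hcX m₀ j) z) y)
          (fun h => h0 h.symm)
      exact hy (Finset.mem_filter.2 ⟨Finset.mem_univ y, hsub y hpos⟩)
    linarith [her m₀]
  have hM'le : M' ≤ Fintype.card Y ^ n' := by
    calc M' = Fintype.card (Fin M') := (Fintype.card_fin M').symm
      _ ≤ Fintype.card (Fin n' → Y) := Fintype.card_le_of_injective c' hinj
      _ = Fintype.card Y ^ n' := by rw [Fintype.card_fun, Fintype.card_fin]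
  have h1 : Real.exp ((n' : ℝ) * r) ≤ Real.exp ((n' : ℝ) * Real.log (Fintype.card Y)) := by
    refine hexp.trans ?_
    rw [Real.exp_nat_mul, Real.exp_log (by exact_mod_cast hY)]
    exact_mod_cast hM'le
  have h2 : (n' : ℝ) * r ≤ (n' : ℝ) * Real.log (Fintype.card Y) := Real.exp_le_exp.mp h1
  have hn0 : (0 : ℝ) < n' := by exact_mod_cast hn'
  exact le_of_mul_le_mul_left (by linarith) hn0

lemma part1 (X : Finset Y)
    (hX : X.Nonempty) (W : Y → Y → ℝ) (ε : ℝ) (hε0 : 0 ≤ ε) (hε1 : ε < 1)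
    (hW0 : ∀ x ∈ X, ∀ y, 0 ≤ W x y)
    (hW1 : ∀ x ∈ X, ∑ y, W x y = 1)
    (hnoise : ∀ x ∈ X, 1 - ε ≤ W x x)
    {n M : ℕ} (hn : 1 ≤ n) (hM : 1 ≤ M) (c : Fin M → Fin n → Y)
    (hc : ∀ m j, c m j ∈ X)
    (hSperner : ∀ m m' : Fin M, m ≠ m' → Wn W n (c m') (c m) = 0) :
    (1 - ε) ^ n * (Real.log M / n) ≤ Ceo X W := by
  have hbdd := ceoSet_bddAbove X hX W hW0 hW1
  have h0le : (0 : ℝ) ≤ Ceo X W := by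
    rw [Ceo]
    exact le_csSup hbdd (Set.mem_insert 0 _)
  set R₀ := (1 - ε) ^ n * (Real.log M / n) with hR₀def
  rcases le_or_gt R₀ 0 with hR₀0 | hR₀pos
  · linarith
  have hp0 : (0 : ℝ) < (1 - ε) ^ n := pow_pos (by linarith) n
  have hp1 : (1 - ε) ^ n ≤ 1 := pow_le_one₀ (by linarith) (by linarith)
  set p := (1 - ε) ^ n with hp
  have hn0 : (0 : ℝ) < n := by exact_mod_cast hn
  have hM2 : 2 ≤ M := by
    by_contra h
    have hM1 : M = 1 := by omega
    rw [hR₀def, hM1] at hR₀pos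
    norm_num at hR₀pos
  have hM0 : (0 : ℝ) < M := by
    have : (0 : ℕ) < M := by omega
    exact_mod_cast this
  have hL0 : 0 < Real.log M := Real.log_pos (by exact_mod_cast hM2)
  set L := Real.log M with hL
  clear_value R₀ p L
  -- membership of every rate R ∈ [0, R₀)
  have hmem : ∀ R : ℝ, 0 ≤ R → R < R₀ →
      R ∈ {R : ℝ | 0 ≤ R ∧ ∀ δ : ℝ, 0 < δ →
        ∃ (n M : ℕ) (c : Fin M → Fin n → Y), 1 ≤ n ∧ (∀ m j, c m j ∈ X) ∧
          Real.exp (n * R) ≤ (M : ℝ) ∧ ∀ m, erasureProb W c m < δ} := by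
    intro R hR0 hRlt
    refine ⟨hR0, ?_⟩
    intro δ hδ
    have hγ0 : 0 < R₀ - R := by linarith
    set γ := R₀ - R with hγdef
    have hγpos : 0 < γ := hγ0
    set ρ := min 1 (n * γ / (2 * p * L ^ 2)) with hρdef
    have hρ0 : 0 < ρ :=
      lt_min one_pos (div_pos (mul_pos hn0 hγpos)
        (by positivity))
    have hρ1 : ρ ≤ 1 := min_le_left _ _
    have hρL2 : p * ρ * L ^ 2 ≤ n * γ / 2 := by
      have hmin2 : ρ ≤ n * γ / (2 * p * L ^ 2) := min_le_right _ _
      have h2 : p * (n * γ / (2 * p * L ^ 2)) * L ^ 2 = n * γ / 2 := by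
        field_simp
      calc p * ρ * L ^ 2
          ≤ p * (n * γ / (2 * p * L ^ 2)) * L ^ 2 := by
            apply mul_le_mul_of_nonneg_right
              (mul_le_mul_of_nonneg_left hmin2 hp0.le) (by positivity)
        _ = n * γ / 2 := h2
    clear_value γ
    clear_value ρ
    set θ := (M : ℝ) ^ (-ρ) with hθdef
    have hθeq : θ = Real.exp (-(ρ * L)) := by
      rw [hθdef, Real.rpow_def_of_pos hM0, hL]
      congr 1
      ring
    have hθ0 : 0 < θ := by rw [hθeq]; exact Real.exp_pos _
    have hθ1 : θ ≤ 1 := by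
      rw [hθdef]
      exact Real.rpow_le_one_of_one_le_of_nonpos
        (by exact_mod_cast (by omega : 1 ≤ M)) (by linarith)
    have h1pθ : 0 < 1 - p + p * θ := by nlinarith
    clear_value θ
    have hnR : (n : ℝ) * R = p * L - n * γ := by
      have hcan : (n : ℝ) * (p * (L / n)) = p * L := by field_simp
      rw [hγdef, hR₀def, mul_sub, hcan]
      ring
    have hbase : Real.exp (ρ * ((n : ℝ) * R)) * (1 - p + p * θ) < 1 := by
      have hEe : Real.exp (ρ * L) * Real.exp (-(ρ * L)) = 1 := by
        rw [← Real.exp_add]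
        simp
      have he1 : 1 - Real.exp (-(ρ * L)) ≤ ρ * L := by
        nlinarith [Real.add_one_le_exp (-(ρ * L))]
      have he2 : ρ * L * Real.exp (-(ρ * L)) ≤ 1 - Real.exp (-(ρ * L)) := by
        nlinarith [Real.add_one_le_exp (ρ * L), Real.exp_pos (-(ρ * L)), hEe]
      have hkey : ρ * ((n : ℝ) * R) < p * (1 - θ) := by
        rw [hnR, hθeq]
        have h3 : p * L * (1 - Real.exp (-(ρ * L))) < n * γ := by
          have hnγ : 0 < (n : ℝ) * γ := mul_pos hn0 hγpos
          calc p * L * (1 - Real.exp (-(ρ * L)))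
              ≤ p * L * (ρ * L) := by
                apply mul_le_mul_of_nonneg_left he1 (mul_pos hp0 hL0).le
            _ = p * ρ * L ^ 2 := by ring
            _ ≤ n * γ / 2 := hρL2
            _ < n * γ := half_lt_self hnγ
        have h4 : p * (ρ * L * Real.exp (-(ρ * L))) ≤ p * (1 - Real.exp (-(ρ * L))) :=
          mul_le_mul_of_nonneg_left he2 hp0.le
        have h5 : ρ * (p * L * (1 - Real.exp (-(ρ * L)))) < ρ * ((n : ℝ) * γ) :=
          (mul_lt_mul_iff_right₀ hρ0).mpr h3
        nlinarith [h4, h5]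
      calc Real.exp (ρ * ((n : ℝ) * R)) * (1 - p + p * θ)
          ≤ Real.exp (ρ * ((n : ℝ) * R)) * Real.exp (-(p * (1 - θ))) := by
            apply mul_le_mul_of_nonneg_left _ (Real.exp_pos _).le
            have := Real.add_one_le_exp (-(p * (1 - θ)))
            linarith
        _ = Real.exp (ρ * ((n : ℝ) * R) - p * (1 - θ)) := by
            rw [← Real.exp_add]
            ring_nf
        _ < 1 := by
            rw [Real.exp_lt_one_iff]
            linarith
    set b := Real.exp (ρ * ((n : ℝ) * R)) * (1 - p + p * θ) with hbdef
    have hb0 : 0 < b := mul_pos (Real.exp_pos _) h1pθ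
    have hb1 : b < 1 := hbase
    clear_value b
    obtain ⟨k₀, hk₀⟩ := exists_pow_lt_of_lt_one (show (0 : ℝ) < δ / 8 by linarith) hb1
    set k := max 1 k₀ with hkdef
    have hk1 : 1 ≤ k := le_max_left _ _
    have hbkδ : b ^ k < δ / 8 :=
      lt_of_le_of_lt (pow_le_pow_of_le_one hb0.le hb1.le (le_max_right _ _)) hk₀
    set EN := Real.exp ((k * n : ℕ) * R) with hENdef
    have hEN1 : 1 ≤ EN := Real.one_le_exp (mul_nonneg (Nat.cast_nonneg _) hR0)
    set K₀ := ⌈EN⌉₊ with hK₀def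
    have hK₀1 : 1 ≤ K₀ := Nat.one_le_ceil_iff.mpr (by linarith)
    set K := 2 * K₀ with hKdef
    have hK2 : 2 ≤ K := by omega
    -- apply the core random-coding lemma with Z = Fin n → Y, V = Wn W n
    obtain ⟨u, hu⟩ := core (Wn W n) hM c
      (fun a z => Wn_nonneg W (fun j z' => hW0 _ (hc a j) z') z)
      (fun a => Wn_sum_one W (fun j => hW1 _ (hc a j)))
      hp0
      (fun a => by
        rw [hp, Wn_eq_prod]
        calc (1 - ε) ^ n = ∏ _j : Fin n, (1 - ε) := by
              rw [Finset.prod_const, Finset.card_univ, Fintype.card_fin]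
          _ ≤ ∏ j, W (c a j) (c a j) :=
              Finset.prod_le_prod (fun _ _ => by linarith)
                (fun j _ => hnoise _ (hc a j)))
      (fun a b' hab => hSperner a b' hab)
      hρ0 hρ1 hθdef k K hK2
    set Bd := (K : ℝ) ^ ρ * (1 - p + p * θ) ^ k with hBddef
    have hBd0 : 0 < Bd :=
      mul_pos (Real.rpow_pos_of_pos (by exact_mod_cast (by omega : 0 < K)) ρ)
        (pow_pos h1pθ k)
    have h2Bd : 2 * Bd < δ := by
      have hKle : (K : ℝ) ≤ 4 * EN := by
        rw [hKdef]
        push_cast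
        have hceil : (K₀ : ℝ) < EN + 1 := by
          rw [hK₀def]
          exact Nat.ceil_lt_add_one (by linarith)
        nlinarith
      have hENρ : EN ^ ρ = Real.exp (ρ * ((n : ℝ) * R)) ^ k := by
        rw [hENdef, Real.rpow_def_of_pos (Real.exp_pos _), Real.log_exp,
          ← Real.exp_nat_mul]
        congr 1
        push_cast
        ring
      have hKρle : (K : ℝ) ^ ρ ≤ 4 * Real.exp (ρ * ((n : ℝ) * R)) ^ k := by
        calc (K : ℝ) ^ ρ ≤ (4 * EN) ^ ρ :=
              Real.rpow_le_rpow (Nat.cast_nonneg K) hKle hρ0.le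
          _ = 4 ^ ρ * EN ^ ρ := Real.mul_rpow (by norm_num) (by linarith)
          _ ≤ 4 * EN ^ ρ := by
              apply mul_le_mul_of_nonneg_right _
                (Real.rpow_nonneg (by linarith) ρ)
              calc (4 : ℝ) ^ ρ ≤ 4 ^ (1 : ℝ) :=
                    Real.rpow_le_rpow_of_exponent_le (by norm_num) hρ1
                _ = 4 := Real.rpow_one 4
          _ = 4 * Real.exp (ρ * ((n : ℝ) * R)) ^ k := by rw [hENρ]
      calc 2 * Bd = 2 * ((K : ℝ) ^ ρ * (1 - p + p * θ) ^ k) := by rw [hBddef]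
        _ ≤ 2 * (4 * Real.exp (ρ * ((n : ℝ) * R)) ^ k * (1 - p + p * θ) ^ k) := by
            apply mul_le_mul_of_nonneg_left _ (by norm_num)
            exact mul_le_mul_of_nonneg_right hKρle (pow_nonneg h1pθ.le k)
        _ = 8 * b ^ k := by rw [hbdef, mul_pow]; ring
        _ < 8 * (δ / 8) := by linarith
        _ = δ := by ring
    -- expurgation
    set f : Fin K → ℝ := fun m => erasureProb (Wn W n) (fun i => c ∘ u i) m with hfdef
    have hWnn2 : ∀ (m' : Fin K) (y : Fin k → Fin n → Y),
        0 ≤ Wn (Wn W n) k ((fun i => c ∘ u i) m') y :=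
      fun m' y => Wn_nonneg (Wn W n)
        (fun j z => Wn_nonneg W (fun j' z' => hW0 _ (hc _ j') z') z) y
    have hf0 : ∀ m, 0 ≤ f m := fun m =>
      erasureProb_nonneg (Wn W n) (fun i => c ∘ u i) hWnn2 m
    set bad := Finset.univ.filter (fun m : Fin K => 2 * Bd < f m) with hbaddef
    clear_value bad
    have hbadcard : bad.card ≤ K₀ := by
      have h1 : (bad.card : ℝ) * (2 * Bd) ≤ ∑ m ∈ bad, f m := by
        have := Finset.card_nsmul_le_sum bad f (2 * Bd)
          (fun m hm => by
            rw [hbaddef] at hm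
            exact le_of_lt (Finset.mem_filter.1 hm).2)
        rwa [nsmul_eq_mul] at this
      have h2 : ∑ m ∈ bad, f m ≤ ∑ m, f m :=
        Finset.sum_le_sum_of_subset_of_nonneg (Finset.subset_univ bad)
          (fun m _ _ => hf0 m)
      have h3 : (bad.card : ℝ) * (2 * Bd) ≤ K * Bd := le_trans h1 (le_trans h2 hu)
      have h4 : (2 * bad.card : ℝ) ≤ K := by nlinarith
      have h5 : 2 * bad.card ≤ K := by exact_mod_cast h4
      omega
    set good := Finset.univ \ bad with hgooddef
    clear_value good
    have hgoodcard : K₀ ≤ good.card := by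
      rw [hgooddef, Finset.card_sdiff_of_subset (Finset.subset_univ bad),
        Finset.card_univ, Fintype.card_fin]
      omega
    obtain ⟨good', hgood'sub, hgood'card⟩ := Finset.exists_subset_card_eq hgoodcard
    set e := good'.orderIsoOfFin hgood'card with hedef
    refine ⟨k * n, K₀, fun i => flatEquiv k n (c ∘ u (e i)), ?_, ?_, ?_, ?_⟩
    · simpa using Nat.mul_le_mul hk1 hn
    · intro m j
      exact hc _ _
    · rw [hK₀def]
      exact_mod_cast Nat.le_ceil EN
    · intro m
      have hg : ((e m : Fin K)) ∈ good := hgood'sub (e m).2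
      have hfle : f (e m) ≤ 2 * Bd := by
        by_contra hlt
        push_neg at hlt
        rw [hgooddef] at hg
        apply (Finset.mem_sdiff.1 hg).2
        rw [hbaddef]
        exact Finset.mem_filter.2 ⟨Finset.mem_univ _, hlt⟩
      have htrans : erasureProb W (fun i => flatEquiv k n (c ∘ u (e i))) m
          = erasureProb (Wn W n) (fun i => c ∘ u (e i)) m :=
        erasure_flat W k n K₀ (fun i => c ∘ u (e i)) m
      have hemb : Function.Injective (fun i : Fin K₀ => (e i : Fin K)) := by
        intro i i' hii
        exact e.injective (Subtype.ext hii)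
      have hsub : erasureProb (Wn W n) (fun i => c ∘ u (e i)) m ≤ f (e m) :=
        erasureProb_comp_le (Wn W n) (fun i => c ∘ u i) hWnn2
          (fun i : Fin K₀ => (e i : Fin K)) hemb m
      calc erasureProb W (fun i => flatEquiv k n (c ∘ u (e i))) m
          = erasureProb (Wn W n) (fun i => c ∘ u (e i)) m := htrans
        _ ≤ f (e m) := hsub
        _ ≤ 2 * Bd := hfle
        _ < δ := h2Bd
  -- conclude via sSup
  apply le_of_forall_sub_le
  intro η hη
  set R := max 0 (R₀ - η) with hRdef
  have hRlt : R < R₀ := max_lt hR₀pos (by linarith)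
  have hRmem := hmem R (le_max_left _ _) hRlt
  have hle : R ≤ Ceo X W := by
    rw [Ceo]
    exact le_csSup hbdd (Set.mem_insert_of_mem _ hRmem)
  have : R₀ - η ≤ R := le_max_right _ _
  linarith

end PartOne


/-- If `W` is an `ε`-noise channel and `c` is a blocklength-`n` Sperner code of
size `M`, then `C_eo(W) ≥ (1-ε)ⁿ (log M)/n`.  In particular (second conjunct),
for fixed support of the transition law, `liminf_{ε→0} C_eo ≥ C_sp`: for every
`δ > 0` there is an `ε₀ > 0` such that every `ε'`-noise channel `W'` with
`ε' < ε₀` whose transition law has the same support as `W` satisfies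
`C_eo(W') ≥ C_sp(W) - δ`. -/
theorem zue_capacity_ge_sperner_code {Y : Type*} [Fintype Y] (X : Finset Y)
    (hX : X.Nonempty) (W : Y → Y → ℝ) (ε : ℝ) (hε0 : 0 ≤ ε) (hε1 : ε < 1)
    (hW0 : ∀ x ∈ X, ∀ y, 0 ≤ W x y)
    (hW1 : ∀ x ∈ X, ∑ y, W x y = 1)
    (hnoise : ∀ x ∈ X, 1 - ε ≤ W x x)
    {n M : ℕ} (hn : 1 ≤ n) (hM : 1 ≤ M) (c : Fin M → Fin n → Y)
    (hc : ∀ m j, c m j ∈ X)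
    (hSperner : ∀ m m' : Fin M, m ≠ m' → Wn W n (c m') (c m) = 0) :
    (1 - ε) ^ n * (Real.log M / n) ≤ Ceo X W ∧
    ∀ δ : ℝ, 0 < δ → ∃ ε₀ : ℝ, 0 < ε₀ ∧
      ∀ ε' : ℝ, 0 ≤ ε' → ε' < ε₀ →
        ∀ W' : Y → Y → ℝ,
          (∀ x ∈ X, ∀ y, 0 ≤ W' x y) →
          (∀ x ∈ X, ∑ y, W' x y = 1) →
          (∀ x ∈ X, 1 - ε' ≤ W' x x) →
          (∀ x ∈ X, ∀ y, (0 < W' x y ↔ 0 < W x y)) →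
          Csp X W - δ ≤ Ceo X W' := by
  constructor
  · exact part1 X hX W ε hε0 hε1 hW0 hW1 hnoise hn hM c hc hSperner
  intro δ hδ
  have hYne : Nonempty Y := ⟨hX.choose⟩
  have hY : 0 < Fintype.card Y := Fintype.card_pos_iff.mpr hYne
  have hSne : (Real.log M / n) ∈ {r : ℝ | ∃ (n M : ℕ) (c : Fin M → Fin n → Y),
      1 ≤ n ∧ 1 ≤ M ∧ (∀ m j, c m j ∈ X) ∧
      (∀ m m' : Fin M, m ≠ m' → Wn W n (c m') (c m) = 0) ∧
      r = Real.log M / n} := ⟨n, M, c, hn, hM, hc, hSperner, rfl⟩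
  have hlt : Csp X W - δ / 2 < sSup {r : ℝ | ∃ (n M : ℕ) (c : Fin M → Fin n → Y),
      1 ≤ n ∧ 1 ≤ M ∧ (∀ m j, c m j ∈ X) ∧
      (∀ m m' : Fin M, m ≠ m' → Wn W n (c m') (c m) = 0) ∧
      r = Real.log M / n} := by
    rw [Csp] at *
    exact sub_lt_self _ (half_pos hδ)
  obtain ⟨r, hrS, hrgt⟩ := exists_lt_of_lt_csSup ⟨_, hSne⟩ hlt
  obtain ⟨n₁, M₁, c₁, hn₁, hM₁, hc₁, hSp₁, hr⟩ := hrS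
  have hn₁0 : (0 : ℝ) < n₁ := by exact_mod_cast hn₁
  have hr0 : 0 ≤ r := by
    rw [hr]
    exact div_nonneg (Real.log_nonneg (by exact_mod_cast hM₁)) hn₁0.le
  refine ⟨min 1 (δ / (2 * n₁ * (r + 1))), lt_min one_pos (by positivity), ?_⟩
  intro ε' hε'0 hε'lt W' hW0' hW1' hnoise' hsupp
  have hε'1 : ε' < 1 := lt_of_lt_of_le hε'lt (min_le_left _ _)
  have hSp₁' : ∀ m m' : Fin M₁, m ≠ m' → Wn W' n₁ (c₁ m') (c₁ m) = 0 := by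
    intro m m' hne
    have h0 := hSp₁ m m' hne
    rw [Wn_eq_prod] at h0 ⊢
    obtain ⟨j, -, hj⟩ := Finset.prod_eq_zero_iff.1 h0
    apply Finset.prod_eq_zero (Finset.mem_univ j)
    have hnpos : ¬ 0 < W (c₁ m' j) (c₁ m j) := by
      rw [hj]; exact lt_irrefl 0
    have hnpos' : ¬ 0 < W' (c₁ m' j) (c₁ m j) :=
      fun hp => hnpos ((hsupp _ (hc₁ m' j) _).1 hp)
    exact le_antisymm (not_lt.1 hnpos') (hW0' _ (hc₁ m' j) _)
  have hml := part1 X hX W' ε' hε'0 hε'1 hW0' hW1' hnoise' hn₁ hM₁ c₁ hc₁ hSp₁'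
  have hBern : 1 - (n₁ : ℝ) * ε' ≤ (1 - ε') ^ n₁ := by
    have h := one_add_mul_le_pow (show (-2 : ℝ) ≤ -ε' by linarith) n₁
    rw [show (1 : ℝ) + -ε' = 1 - ε' from by ring] at h
    linarith
  have hεr : (n₁ : ℝ) * ε' * r ≤ δ / 2 := by
    have h1 : ε' ≤ δ / (2 * n₁ * (r + 1)) :=
      le_of_lt (lt_of_lt_of_le hε'lt (min_le_right _ _))
    have h2 : (n₁ : ℝ) * ε' * r ≤ n₁ * (δ / (2 * n₁ * (r + 1))) * r :=
      mul_le_mul_of_nonneg_right (mul_le_mul_of_nonneg_left h1 hn₁0.le) hr0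
    have h3 : (n₁ : ℝ) * (δ / (2 * n₁ * (r + 1))) * r = δ / 2 * (r / (r + 1)) := by
      field_simp
    have h4 : r / (r + 1) ≤ 1 := by
      rw [div_le_one (by linarith)]
      linarith
    nlinarith [h2, h3, h4, hδ]
  have hfinal : r - δ / 2 ≤ (1 - ε') ^ n₁ * r := by
    have hmul := mul_le_mul_of_nonneg_right hBern hr0
    nlinarith [hmul, hεr]
  have hml' : (1 - ε') ^ n₁ * r ≤ Ceo X W' := by
    rw [hr]
    exact hml
  linarith [hml', hfinal, hrgt]
end

section
/- Let W be an ε-noise channel (0 ≤ ε < 1) with input alphabet X and output alphabet Y. Then for every n ≥ 1 and every PMF P on X^n that is uniform over its support, Σ_{y ∈ supp(PW^n)} (PW^n)(y) / P(X^n(y)) ≤ ( e^{C_sp(W)} + ε·|X|·(|Y|−1) )^n, where supp(PW^n) = {y ∈ Y^n : (PW^n)(y) > 0}. -/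
open scoped Classical
open Real Finset

set_option linter.unusedSectionVars false
set_option linter.unusedVariables false
set_option maxHeartbeats 1000000

section Aux
variable {Y : Type*} [Fintype Y] (X : Finset Y) (W : Y → Y → ℝ) (ε : ℝ)

def CspSet : Set ℝ :=
  {r : ℝ | ∃ (n M : ℕ) (c : Fin M → Fin n → Y), 1 ≤ n ∧ 1 ≤ M ∧
    (∀ m j, c m j ∈ X) ∧ (∀ m m' : Fin M, m ≠ m' → Wn W n (c m') (c m) = 0) ∧
    r = Real.log M / n}

lemma csp_eq : Csp X W = sSup (CspSet X W) := rfl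

variable {X W ε}

lemma Wn_nonneg_s19 (hW0 : ∀ x ∈ X, ∀ y, 0 ≤ W x y) {m : ℕ} {x : Fin m → Y}
    (hx : ∀ j, x j ∈ X) (y : Fin m → Y) : 0 ≤ Wn W m x y :=
  Finset.prod_nonneg fun j _ => hW0 _ (hx j) _

lemma Wn_diag_pos (hε1 : ε < 1) (hnoise : ∀ x ∈ X, 1 - ε ≤ W x x)
    {m : ℕ} {x : Fin m → Y} (hx : ∀ j, x j ∈ X) : 0 < Wn W m x x :=
  Finset.prod_pos fun j _ => lt_of_lt_of_le (by linarith) (hnoise _ (hx j))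

lemma W_le_one (hW0 : ∀ x ∈ X, ∀ y, 0 ≤ W x y) (hW1 : ∀ x ∈ X, ∑ y, W x y = 1)
    {a : Y} (ha : a ∈ X) (b : Y) : W a b ≤ 1 := by
  rw [← hW1 a ha]
  exact Finset.single_le_sum (fun y _ => hW0 a ha y) (mem_univ b)

lemma W_le_eps (hW0 : ∀ x ∈ X, ∀ y, 0 ≤ W x y) (hW1 : ∀ x ∈ X, ∑ y, W x y = 1)
    (hnoise : ∀ x ∈ X, 1 - ε ≤ W x x) {a b : Y} (ha : a ∈ X) (hab : a ≠ b) :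
    W a b ≤ ε := by
  have hsum : W a a + W a b ≤ ∑ y, W a y := by
    have h := Finset.sum_le_sum_of_subset_of_nonneg (Finset.subset_univ ({a, b} : Finset Y))
      (fun y _ _ => hW0 a ha y)
    rwa [Finset.sum_pair hab] at h
  have := hnoise a ha
  have := hW1 a ha
  linarith

lemma Wn_le_eps_pow (hε0 : 0 ≤ ε) (hW0 : ∀ x ∈ X, ∀ y, 0 ≤ W x y)
    (hW1 : ∀ x ∈ X, ∑ y, W x y = 1) (hnoise : ∀ x ∈ X, 1 - ε ≤ W x x)
    {m : ℕ} {x : Fin m → Y} (hx : ∀ j, x j ∈ X) (y : Fin m → Y) :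
    Wn W m x y ≤ ε ^ (univ.filter (fun j => x j ≠ y j)).card := by
  calc Wn W m x y ≤ ∏ j, (if x j = y j then 1 else ε) := by
        refine Finset.prod_le_prod (fun j _ => hW0 _ (hx j) _) (fun j _ => ?_)
        by_cases h : x j = y j
        · simpa [h] using W_le_one hW0 hW1 (hx j) (y j)
        · simpa [h] using W_le_eps hW0 hW1 hnoise (hx j) h
    _ = ε ^ (univ.filter (fun j => x j ≠ y j)).card := by
        rw [Finset.prod_ite]
        simp [Finset.prod_const, Ne]

lemma zero_mem_cspSet (hX : X.Nonempty) : (0 : ℝ) ∈ CspSet X W := by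
  obtain ⟨a, ha⟩ := hX
  exact ⟨1, 1, fun _ _ => a, le_refl _, le_refl _, fun _ _ => ha,
    fun m m' h => absurd (Subsingleton.elim m m') h, by simp⟩

lemma cspSet_bddAbove (hX : X.Nonempty) (hε1 : ε < 1)
    (hnoise : ∀ x ∈ X, 1 - ε ≤ W x x) : BddAbove (CspSet X W) := by
  have hY : (1 : ℕ) ≤ Fintype.card Y := by
    obtain ⟨a, _⟩ := hX
    exact Fintype.card_pos_iff.2 ⟨a⟩
  refine ⟨Real.log (Fintype.card Y), fun r hr => ?_⟩
  obtain ⟨n, M, c, hn, hM, hcX, hz, rfl⟩ := hr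
  have hcinj : Function.Injective c := by
    intro m m' h
    by_contra hne
    have h0 := hz m m' hne
    rw [h] at h0
    exact (Wn_diag_pos hε1 hnoise (fun j => hcX m' j)).ne' h0
  have hMle : M ≤ Fintype.card Y ^ n := by
    have := Fintype.card_le_of_injective c hcinj
    simpa [Fintype.card_fun] using this
  have hn' : (0 : ℝ) < n := by exact_mod_cast hn
  rw [div_le_iff₀ hn']
  calc Real.log M ≤ Real.log ((Fintype.card Y : ℝ) ^ n) := by
        apply Real.log_le_log (by exact_mod_cast hM)
        exact_mod_cast hMle
    _ = n * Real.log (Fintype.card Y) := Real.log_pow _ _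
    _ = Real.log (Fintype.card Y) * n := mul_comm _ _

lemma le_csp (hX : X.Nonempty) (hε1 : ε < 1) (hnoise : ∀ x ∈ X, 1 - ε ≤ W x x)
    {r : ℝ} (hr : r ∈ CspSet X W) : r ≤ Csp X W :=
  le_csSup (cspSet_bddAbove hX hε1 hnoise) hr

lemma csp_nonneg (hX : X.Nonempty) (hε1 : ε < 1) (hnoise : ∀ x ∈ X, 1 - ε ≤ W x x) :
    0 ≤ Csp X W :=
  le_csp hX hε1 hnoise (zero_mem_cspSet hX)

lemma staircase {β : Type*} (r : β → β → Prop) (U : Finset β) :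
    (∀ u ∈ U, r u u) →
    ∃ (M : ℕ) (c : Fin M → β), (∀ i, c i ∈ U) ∧
      (∀ i j : Fin M, i < j → ¬ r (c i) (c j)) ∧
      ∑ u ∈ U, (((U.filter (fun u' => r u' u)).card : ℝ))⁻¹ ≤ M := by
  classical
  induction U using Finset.strongInduction with
  | _ U ih =>
    intro href
    rcases U.eq_empty_or_nonempty with rfl | hU
    · exact ⟨0, Fin.elim0, fun i => i.elim0, fun i j _ => i.elim0, by simp⟩
    · obtain ⟨u0, hu0, hmin⟩ :=
        U.exists_min_image (fun u => (U.filter (fun u' => r u' u)).card) hU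
      set D := U.filter (fun u' => r u' u0) with hD
      have hu0D : u0 ∈ D := mem_filter.2 ⟨hu0, href u0 hu0⟩
      have hDU : D ⊆ U := filter_subset _ _
      have hssub : U \ D ⊂ U := Finset.sdiff_ssubset hDU ⟨u0, hu0D⟩
      obtain ⟨M, c, hcU, hstair, hsum⟩ :=
        ih (U \ D) hssub (fun u hu => href u (mem_sdiff.1 hu).1)
      have hDpos : 0 < (D.card : ℝ) := by
        exact_mod_cast Finset.card_pos.2 ⟨u0, hu0D⟩
      refine ⟨M + 1, Fin.snoc c u0, ?_, ?_, ?_⟩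
      · intro i
        rcases Fin.eq_castSucc_or_eq_last i with ⟨i', rfl⟩ | rfl
        · simpa using (mem_sdiff.1 (hcU i')).1
        · simpa using hu0
      · intro i j hij
        rcases Fin.eq_castSucc_or_eq_last j with ⟨j', rfl⟩ | rfl
        · rcases Fin.eq_castSucc_or_eq_last i with ⟨i', rfl⟩ | rfl
          · simp only [Fin.snoc_castSucc]
            exact hstair i' j' (by exact_mod_cast (Fin.castSucc_lt_castSucc_iff.1 hij))
          · exact absurd hij (by simp [Fin.lt_iff_val_lt_val])
        · rcases Fin.eq_castSucc_or_eq_last i with ⟨i', rfl⟩ | rfl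
          · simp only [Fin.snoc_castSucc, Fin.snoc_last]
            intro hr
            exact (mem_sdiff.1 (hcU i')).2 (mem_filter.2 ⟨(mem_sdiff.1 (hcU i')).1, hr⟩)
          · exact absurd hij (lt_irrefl _)
      · have hsplit : ∑ u ∈ U \ D, (((U.filter (fun u' => r u' u)).card : ℝ))⁻¹
            + ∑ u ∈ D, (((U.filter (fun u' => r u' u)).card : ℝ))⁻¹
            = ∑ u ∈ U, (((U.filter (fun u' => r u' u)).card : ℝ))⁻¹ :=
          Finset.sum_sdiff hDU
        have h1 : ∑ u ∈ D, (((U.filter (fun u' => r u' u)).card : ℝ))⁻¹ ≤ 1 := by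
          have hterm : ∀ u ∈ D, (((U.filter (fun u' => r u' u)).card : ℝ))⁻¹ ≤ (D.card : ℝ)⁻¹ := by
            intro u hu
            have := hmin u (hDU hu)
            exact inv_anti₀ hDpos (by exact_mod_cast this)
          calc ∑ u ∈ D, (((U.filter (fun u' => r u' u)).card : ℝ))⁻¹
              ≤ D.card • (D.card : ℝ)⁻¹ := Finset.sum_le_card_nsmul _ _ _ hterm
            _ = 1 := by
                rw [nsmul_eq_mul, mul_inv_cancel₀ (ne_of_gt hDpos)]
        have h2 : ∑ u ∈ U \ D, (((U.filter (fun u' => r u' u)).card : ℝ))⁻¹ ≤ M := by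
          refine le_trans (Finset.sum_le_sum ?_) hsum
          intro u hu
          have hsubf : (U \ D).filter (fun u' => r u' u) ⊆ U.filter (fun u' => r u' u) :=
            Finset.filter_subset_filter _ (Finset.sdiff_subset)
          have hpos0 : 0 < ((U \ D).filter (fun u' => r u' u)).card :=
            Finset.card_pos.2 ⟨u, mem_filter.2 ⟨hu, href u (mem_sdiff.1 hu).1⟩⟩
          have hpos : 0 < (((U \ D).filter (fun u' => r u' u)).card : ℝ) := by
            exact_mod_cast hpos0
          exact inv_anti₀ hpos (by exact_mod_cast Finset.card_le_card hsubf)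
        push_cast
        linarith

lemma Wn_flatten {m k : ℕ} (f g : Fin k → Fin m → Y) :
    Wn W (m * k) (fun j => f (finProdFinEquiv.symm j).2 (finProdFinEquiv.symm j).1)
      (fun j => g (finProdFinEquiv.symm j).2 (finProdFinEquiv.symm j).1)
    = ∏ l : Fin k, Wn W m (f l) (g l) := by
  unfold Wn
  have h := Equiv.prod_comp (finProdFinEquiv (m := m) (n := k)).symm
    (fun p : Fin m × Fin k => W (f p.2 p.1) (g p.2 p.1))
  rw [h]
  rw [Fintype.prod_prod_type (fun p : Fin m × Fin k => W (f p.2 p.1) (g p.2 p.1))]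
  exact Finset.prod_comm

lemma log_staircase_le (hX : X.Nonempty) (hε1 : ε < 1)
    (hnoise : ∀ x ∈ X, 1 - ε ≤ W x x) {m M : ℕ} (hm : 1 ≤ m) (hM : 1 ≤ M)
    (c : Fin M → Fin m → Y) (hcX : ∀ i j, c i j ∈ X)
    (hst : ∀ i j : Fin M, i < j → Wn W m (c i) (c j) = 0) :
    Real.log M ≤ m * Csp X W := by
  have key : ∀ k : ℕ, 1 ≤ k →
      (k : ℝ) * Real.log M ≤ Real.log (k * M : ℕ) + (m * k : ℕ) * Csp X W := by
    intro k hk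
    set F : (Fin k → Fin M) → ℕ := fun a => ∑ i, (a i : ℕ) with hF
    have hkM : 0 < k * M := Nat.mul_pos hk hM
    have hmem : ∀ a : Fin k → Fin M, F a ∈ Finset.range (k * M) := by
      intro a; rw [Finset.mem_range]
      have h1 : F a ≤ k * (M - 1) := by
        calc F a ≤ ∑ _i : Fin k, (M - 1) :=
              Finset.sum_le_sum (fun i _ => Nat.le_sub_one_of_lt (a i).2)
          _ = k * (M - 1) := by simp [Finset.sum_const, Finset.card_univ, mul_comm]
      have h2 : k * (M - 1) + k = k * M := by
        obtain ⟨M0, rfl⟩ : ∃ M0, M = M0 + 1 := ⟨M - 1, by omega⟩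
        simp [Nat.mul_succ]
      omega
    have hpart : ∑ s ∈ Finset.range (k * M),
        ((univ.filter (fun a : Fin k → Fin M => F a = s)).card) = M ^ k := by
      rw [← Finset.card_eq_sum_card_fiberwise (fun a _ => hmem a)]
      simp [Finset.card_univ, Fintype.card_fun]
    obtain ⟨s, hs, hsmax⟩ := Finset.exists_max_image (Finset.range (k * M))
      (fun s => (univ.filter (fun a : Fin k → Fin M => F a = s)).card)
      ⟨0, Finset.mem_range.2 hkM⟩
    set T := univ.filter (fun a : Fin k → Fin M => F a = s) with hT
    set Ds := T.card with hDs
    have hDsb : M ^ k ≤ k * M * Ds := by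
      calc M ^ k = ∑ s' ∈ Finset.range (k * M),
            ((univ.filter (fun a : Fin k → Fin M => F a = s')).card) := hpart.symm
        _ ≤ (Finset.range (k * M)).card • Ds :=
            Finset.sum_le_card_nsmul _ _ _ (fun i hi => hsmax i hi)
        _ = k * M * Ds := by rw [Finset.card_range, smul_eq_mul]
    have hDs1 : 1 ≤ Ds := by
      rcases Nat.eq_zero_or_pos Ds with h | h
      · rw [h, Nat.mul_zero] at hDsb
        have : 1 ≤ M ^ k := Nat.one_le_pow _ _ hM
        omega
      · exact h
    have hmk : 1 ≤ m * k := Nat.mul_pos hm hk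
    have hmem2 : Real.log Ds / ((m * k : ℕ) : ℝ) ∈ CspSet X W := by
      set e : Fin Ds → (Fin k → Fin M) := fun i => (T.equivFin.symm i : _) with he
      have heT : ∀ i, e i ∈ T := fun i => (T.equivFin.symm i).2
      have heinj : Function.Injective e :=
        fun i i' h => T.equivFin.symm.injective (Subtype.ext h)
      refine ⟨m * k, Ds,
        fun i j => c (e i (finProdFinEquiv.symm j).2) (finProdFinEquiv.symm j).1,
        hmk, hDs1, fun i j => hcX _ _, ?_, rfl⟩
      intro i i' hne
      have hflat := Wn_flatten (W := W) (fun l => c (e i' l)) (fun l => c (e i l))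
      have hsume : F (e i) = s := (Finset.mem_filter.1 (heT i)).2
      have hsume' : F (e i') = s := (Finset.mem_filter.1 (heT i')).2
      have hexl : ∃ l, e i' l < e i l := by
        by_contra hco
        push_neg at hco
        have hne2 : e i ≠ e i' := fun h => hne (heinj h)
        obtain ⟨l0, hl0⟩ := Function.ne_iff.1 hne2
        have hlt : ((e i) l0 : ℕ) < ((e i') l0 : ℕ) := by
          have h1 : ((e i) l0 : ℕ) ≤ ((e i') l0 : ℕ) := hco l0
          have h2 : ((e i) l0 : ℕ) ≠ ((e i') l0 : ℕ) := fun h => hl0 (Fin.ext h)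
          omega
        have : F (e i) < F (e i') := by
          apply Finset.sum_lt_sum (fun l _ => ?_) ⟨l0, Finset.mem_univ l0, hlt⟩
          exact_mod_cast hco l
        omega
      obtain ⟨l, hl⟩ := hexl
      exact hflat.trans (Finset.prod_eq_zero (Finset.mem_univ l) (hst _ _ hl))
    have hle := le_csp hX hε1 hnoise hmem2
    have hmk' : (0 : ℝ) < ((m * k : ℕ) : ℝ) := by exact_mod_cast hmk
    have hlogDs : Real.log Ds ≤ ((m * k : ℕ) : ℝ) * Csp X W := by
      rw [div_le_iff₀ hmk'] at hle
      linarith [hle]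
    have hcast : ((M : ℝ)) ^ k ≤ ((k * M : ℕ) : ℝ) * (Ds : ℝ) := by
      push_cast
      exact_mod_cast hDsb
    have hMpos : (0 : ℝ) < (M : ℝ) := by exact_mod_cast hM
    have hkMpos : (0 : ℝ) < ((k * M : ℕ) : ℝ) := by exact_mod_cast hkM
    have hDspos : (0 : ℝ) < (Ds : ℝ) := by exact_mod_cast hDs1
    calc (k : ℝ) * Real.log M = Real.log ((M : ℝ) ^ k) := (Real.log_pow _ _).symm
      _ ≤ Real.log (((k * M : ℕ) : ℝ) * (Ds : ℝ)) := by
          apply Real.log_le_log (by positivity) hcast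
      _ = Real.log (k * M : ℕ) + Real.log Ds := Real.log_mul (ne_of_gt hkMpos) (ne_of_gt hDspos)
      _ ≤ Real.log (k * M : ℕ) + ((m * k : ℕ) : ℝ) * Csp X W := by linarith
  by_contra hcon
  push_neg at hcon
  set δ := Real.log M - (m : ℝ) * Csp X W with hδdef
  clear_value δ
  have hδ : 0 < δ := by linarith
  set k : ℕ := ⌈(4 / δ) ^ 2⌉₊ + ⌈2 * Real.log M / δ⌉₊ + 1 with hkdef
  clear_value k
  have hk1 : 1 ≤ k := by omega
  have hkR : (1 : ℝ) ≤ (k : ℝ) := by exact_mod_cast hk1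
  have hkey := key k hk1
  have hlogkM : Real.log (k * M : ℕ) = Real.log k + Real.log M := by
    push_cast
    exact Real.log_mul (by positivity) (by exact_mod_cast Nat.one_le_iff_ne_zero.1 hM)
  have hsq : Real.sqrt k * Real.sqrt k = (k : ℝ) :=
    Real.mul_self_sqrt (by positivity)
  have hsqpos : 0 < Real.sqrt k := Real.sqrt_pos.2 (by linarith)
  have hlogk : Real.log k ≤ 2 * Real.sqrt k := by
    have h1 : Real.log (Real.sqrt k) = Real.log k / 2 := Real.log_sqrt (by positivity)
    have h2 : Real.log (Real.sqrt k) ≤ Real.sqrt k - 1 := Real.log_le_sub_one_of_pos hsqpos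
    linarith
  have hkge1 : ((4 / δ) ^ 2 : ℝ) ≤ (k : ℝ) := by
    calc ((4 / δ) ^ 2 : ℝ) ≤ (⌈(4 / δ) ^ 2⌉₊ : ℝ) := Nat.le_ceil _
      _ ≤ (k : ℝ) := by exact_mod_cast (by omega : ⌈(4 / δ) ^ 2⌉₊ ≤ k)
  have hsqk : 4 / δ ≤ Real.sqrt k := by
    have := Real.sqrt_le_sqrt hkge1
    rwa [Real.sqrt_sq (by positivity)] at this
  have hbound1 : 2 * Real.sqrt k ≤ (δ / 2) * k := by
    have h4 : 4 ≤ Real.sqrt k * δ := (div_le_iff₀ hδ).1 hsqk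
    have h5 : 4 * Real.sqrt k ≤ (Real.sqrt k * δ) * Real.sqrt k :=
      mul_le_mul_of_nonneg_right h4 hsqpos.le
    have h6 : (Real.sqrt k * δ) * Real.sqrt k = δ * (Real.sqrt k * Real.sqrt k) := by ring
    rw [h6, hsq] at h5
    have h7 : δ / 2 * (k : ℝ) = (δ * (k : ℝ)) / 2 := by ring
    rw [h7]
    linarith
  have hkge2 : 2 * Real.log M / δ + 1 ≤ (k : ℝ) := by
    have h1 : 2 * Real.log M / δ ≤ (⌈2 * Real.log M / δ⌉₊ : ℝ) := Nat.le_ceil _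
    have h2 : (⌈2 * Real.log M / δ⌉₊ : ℝ) + 1 ≤ (k : ℝ) := by
      exact_mod_cast (by omega : ⌈2 * Real.log M / δ⌉₊ + 1 ≤ k)
    linarith
  have hbound2 : Real.log M < (δ / 2) * k := by
    have h7 := mul_le_mul_of_nonneg_left hkge2 (le_of_lt (half_pos hδ))
    have h8 : (δ / 2) * (2 * Real.log M / δ + 1) = Real.log M + δ / 2 := by
      field_simp
    rw [h8] at h7
    linarith
  -- combine
  have hmain : (k : ℝ) * δ ≤ Real.log k + Real.log M := by
    have hrw : ((m * k : ℕ) : ℝ) * Csp X W = (k : ℝ) * ((m : ℝ) * Csp X W) := by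
      push_cast; ring
    rw [hlogkM] at hkey
    rw [hrw] at hkey
    have : (k : ℝ) * δ = (k : ℝ) * Real.log M - (k : ℝ) * ((m : ℝ) * Csp X W) := by
      rw [hδdef]; ring
    linarith
  have : (k : ℝ) * δ < (δ / 2) * k + (δ / 2) * k := by
    calc (k : ℝ) * δ ≤ Real.log k + Real.log M := hmain
      _ ≤ 2 * Real.sqrt k + Real.log M := by linarith
      _ < (δ / 2) * k + (δ / 2) * k := by linarith
  linarith


lemma frac_le_exp (hX : X.Nonempty) (hε1 : ε < 1)
    (hW0 : ∀ x ∈ X, ∀ y, 0 ≤ W x y)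
    (hnoise : ∀ x ∈ X, 1 - ε ≤ W x x)
    (m : ℕ) (U : Finset (Fin m → Y)) (hUX : ∀ u ∈ U, ∀ j, u j ∈ X) :
    ∑ u ∈ U, (((U.filter (fun u' => 0 < Wn W m u' u)).card : ℝ))⁻¹
      ≤ Real.exp (m * Csp X W) := by
  obtain ⟨M, c, hcU, hst, hsum⟩ := staircase (fun u' u => 0 < Wn W m u' u) U
    (fun u hu => Wn_diag_pos hε1 hnoise (fun j => hUX u hu j))
  have hz : ∀ i j : Fin M, i < j → Wn W m (c i) (c j) = 0 := by
    intro i j hij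
    exact le_antisymm (not_lt.1 (hst i j hij))
      (Wn_nonneg_s19 hW0 (fun j' => hUX _ (hcU i) j') _)
  rcases Nat.eq_zero_or_pos M with rfl | hM
  · exact le_trans (by simpa using hsum) (Real.exp_pos _).le
  rcases Nat.eq_zero_or_pos m with rfl | hm
  · have hM1 : M = 1 := by
      by_contra hM1
      have h2 : 2 ≤ M := by omega
      have h01 : (⟨0, by omega⟩ : Fin M) < (⟨1, by omega⟩ : Fin M) := by
        simp [Fin.lt_iff_val_lt_val]
      have := hz _ _ h01
      simp [Wn] at this
    refine le_trans hsum ?_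
    rw [hM1]
    simp
  · have hlog := log_staircase_le hX hε1 hnoise hm hM c
      (fun i j => hUX _ (hcU i) j) hz
    refine le_trans hsum ?_
    calc (M : ℝ) = Real.exp (Real.log M) := by
          rw [Real.exp_log (by exact_mod_cast hM)]
      _ ≤ Real.exp (m * Csp X W) := Real.exp_le_exp.2 hlog

lemma transport_bound (hX : X.Nonempty) (hε1 : ε < 1)
    (hW0 : ∀ x ∈ X, ∀ y, 0 ≤ W x y)
    (hnoise : ∀ x ∈ X, 1 - ε ≤ W x x)
    {n : ℕ} (g : Fin n → Option (Y × Y))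
    (U : Finset (Fin n → Y)) (hUX : ∀ x ∈ U, ∀ j, x j ∈ X)
    (hUg : ∀ x ∈ U, ∀ j q, g j = some q → x j = q.1) :
    ∑ x ∈ U, (((U.filter (fun x' => 0 < Wn W n x' x)).card : ℝ))⁻¹
      ≤ Real.exp (((n - (univ.filter (fun j => g j ≠ none)).card : ℕ) : ℝ) * Csp X W) := by
  classical
  set tg := (univ.filter (fun j => g j ≠ none)).card with htg
  set T0 := univ.filter (fun j => ¬ g j ≠ none) with hT0
  have hmemT0 : ∀ j, j ∈ T0 ↔ g j = none := by
    intro j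
    simp [hT0, Finset.mem_filter]
  have hcards : tg + T0.card = n := by
    rw [htg, hT0]
    rw [Finset.card_filter_add_card_filter_not (p := fun j => g j ≠ none)]
    simp
  have htgn : tg ≤ n := by omega
  have hcard : T0.card = n - tg := by omega
  set m' := n - tg with hm'
  set e := T0.orderIsoOfFin hcard with he
  set ι : (Fin n → Y) → (Fin m' → Y) := fun x i => x (e i) with hι
  -- decomposition of Wn
  have hdec : ∀ x x' : Fin n → Y, Wn W n x' x =
      (∏ j ∈ univ.filter (fun j => g j ≠ none), W (x' j) (x j)) *
        (∏ j ∈ T0, W (x' j) (x j)) := by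
    intro x x'
    rw [hT0]
    exact (Finset.prod_filter_mul_prod_filter_not univ _ _).symm
  have hιprod : ∀ x x' : Fin n → Y, Wn W m' (ι x') (ι x) = ∏ j ∈ T0, W (x' j) (x j) := by
    intro x x'
    have h1 : Wn W m' (ι x') (ι x) = ∏ i : Fin m', W (x' (e i)) (x (e i)) := rfl
    rw [h1]
    refine Eq.trans (Fintype.prod_equiv e.toEquiv
      (fun i => W (x' (e i)) (x (e i)))
      (fun σ : {j // j ∈ T0} => W (x' σ) (x σ)) (fun i => rfl)) ?_
    exact Finset.prod_coe_sort T0 (fun j => W (x' j) (x j))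
  have hsomepos : ∀ x ∈ U, ∀ x' ∈ U,
      0 < ∏ j ∈ univ.filter (fun j => g j ≠ none), W (x' j) (x j) := by
    intro x hx x' hx'
    apply Finset.prod_pos
    intro j hj
    have hjne : g j ≠ none := (Finset.mem_filter.1 hj).2
    obtain ⟨q, hq⟩ := Option.ne_none_iff_exists'.1 hjne
    have h1 : x' j = q.1 := hUg x' hx' j q hq
    have h2 : x j = q.1 := hUg x hx j q hq
    have hq1X : q.1 ∈ X := by rw [← h2]; exact hUX x hx j
    rw [h1, h2]
    have := hnoise q.1 hq1X
    linarith
  have hiff : ∀ x ∈ U, ∀ x' ∈ U, (0 < Wn W n x' x ↔ 0 < Wn W m' (ι x') (ι x)) := by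
    intro x hx x' hx'
    rw [hdec x x', hιprod x x']
    have hA := hsomepos x hx x' hx'
    constructor
    · intro h
      rcases mul_pos_iff.1 h with ⟨_, hB⟩ | ⟨hA', _⟩
      · exact hB
      · linarith
    · intro h
      exact mul_pos hA h
  have hinj : Set.InjOn ι U := by
    intro x hx x' hx' hxx'
    funext j
    by_cases hj : g j = none
    · have hjT0 : j ∈ T0 := (hmemT0 j).2 hj
      have : (⟨j, hjT0⟩ : {a // a ∈ T0}) = e (e.symm ⟨j, hjT0⟩) := by
        rw [OrderIso.apply_symm_apply]
      calc x j = x (e (e.symm ⟨j, hjT0⟩)) := by rw [← this]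
        _ = ι x (e.symm ⟨j, hjT0⟩) := rfl
        _ = ι x' (e.symm ⟨j, hjT0⟩) := by rw [hxx']
        _ = x' j := by rw [hι]; simp only; rw [← this]
    · obtain ⟨q, hq⟩ := Option.ne_none_iff_exists'.1 hj
      rw [hUg x hx j q hq, hUg x' hx' j q hq]
  set U' := U.image ι with hU'
  have hU'X : ∀ u ∈ U', ∀ i, u i ∈ X := by
    intro u hu i
    obtain ⟨x, hx, rfl⟩ := Finset.mem_image.1 hu
    exact hUX x hx _
  have hcardeq : ∀ x ∈ U,
      (U'.filter (fun u' => 0 < Wn W m' u' (ι x))).card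
        = (U.filter (fun x' => 0 < Wn W n x' x)).card := by
    intro x hx
    have hset : U'.filter (fun u' => 0 < Wn W m' u' (ι x))
        = (U.filter (fun x' => 0 < Wn W n x' x)).image ι := by
      ext u'
      simp only [Finset.mem_filter, Finset.mem_image, hU']
      constructor
      · rintro ⟨⟨x', hx', rfl⟩, hpos⟩
        exact ⟨x', ⟨hx', (hiff x hx x' hx').2 hpos⟩, rfl⟩
      · rintro ⟨x', ⟨hx', hpos⟩, rfl⟩
        exact ⟨⟨x', hx', rfl⟩, (hiff x hx x' hx').1 hpos⟩
    rw [hset]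
    exact Finset.card_image_of_injOn (hinj.mono (by
      intro a ha
      exact (Finset.mem_filter.1 ha).1))
  have hsumeq : ∑ u ∈ U', (((U'.filter (fun u' => 0 < Wn W m' u' u)).card : ℝ))⁻¹
      = ∑ x ∈ U, (((U.filter (fun x' => 0 < Wn W n x' x)).card : ℝ))⁻¹ := by
    rw [hU', Finset.sum_image (fun x hx y hy h => hinj hx hy h)]
    apply Finset.sum_congr rfl
    intro x hx
    rw [hcardeq x hx]
  rw [← hsumeq]
  exact frac_le_exp hX hε1 hW0 hnoise m' U' hU'X

lemma card_goodkeys (hX : X.Nonempty) {n : ℕ} (T : Finset (Fin n)) :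
    ((univ.filter (fun g : Fin n → Option (Y × Y) =>
        univ.filter (fun j => g j ≠ none) = T ∧
        ∀ j q, g j = some q → q.1 ∈ X ∧ q.2 ≠ q.1)).card : ℕ)
      ≤ (X.card * (Fintype.card Y - 1)) ^ T.card := by
  classical
  set Opts : Finset (Option (Y × Y)) :=
    ((X ×ˢ univ).filter (fun q : Y × Y => q.2 ≠ q.1)).image some with hOpts
  have hOptscard : Opts.card = X.card * (Fintype.card Y - 1) := by
    rw [hOpts, Finset.card_image_of_injective _ (Option.some_injective _)]
    have hset : (X ×ˢ univ).filter (fun q : Y × Y => q.2 ≠ q.1)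
        = X.biUnion (fun a => {a} ×ˢ (univ.erase a)) := by
      ext ⟨a, b⟩
      simp only [Finset.mem_filter, Finset.mem_product, Finset.mem_biUnion,
        Finset.mem_singleton, Finset.mem_erase, Finset.mem_univ, and_true, true_and]
      constructor
      · rintro ⟨ha, hba⟩
        exact ⟨a, ha, rfl, hba⟩
      · rintro ⟨a', ha', rfl, hba⟩
        exact ⟨ha', hba⟩
    rw [hset, Finset.card_biUnion]
    · have : ∀ a ∈ X, ({a} ×ˢ (univ.erase a)).card = Fintype.card Y - 1 := by
        intro a _
        rw [Finset.card_product, Finset.card_singleton, one_mul,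
          Finset.card_erase_of_mem (Finset.mem_univ a), Finset.card_univ]
      rw [Finset.sum_congr rfl this, Finset.sum_const, smul_eq_mul]
    · intro a ha a' ha' hne
      simp only [Function.onFun]
      rw [Finset.disjoint_left]
      rintro ⟨u, v⟩ hu hv
      have h1 : u = a := by
        have := (Finset.mem_product.1 (by exact_mod_cast hu)).1
        simpa using this
      have h2 : u = a' := by
        have := (Finset.mem_product.1 (by exact_mod_cast hv)).1
        simpa using this
      exact hne (h1 ▸ h2 ▸ rfl)
  have hsubset : (univ.filter (fun g : Fin n → Option (Y × Y) =>
        univ.filter (fun j => g j ≠ none) = T ∧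
        ∀ j q, g j = some q → q.1 ∈ X ∧ q.2 ≠ q.1))
      ⊆ Fintype.piFinset (fun j => if j ∈ T then Opts else ({none} : Finset (Option (Y × Y)))) := by
    intro g hg
    obtain ⟨-, hT, hgood⟩ := Finset.mem_filter.1 hg
    rw [Fintype.mem_piFinset]
    intro j
    by_cases hj : j ∈ T
    · rw [if_pos hj]
      have hjne : g j ≠ none := by
        rw [← hT] at hj
        exact (Finset.mem_filter.1 hj).2
      obtain ⟨q, hq⟩ := Option.ne_none_iff_exists'.1 hjne
      obtain ⟨hq1, hq2⟩ := hgood j q hq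
      rw [hOpts, hq]
      exact Finset.mem_image_of_mem some
        (Finset.mem_filter.2 ⟨Finset.mem_product.2 ⟨hq1, Finset.mem_univ _⟩, hq2⟩)
    · rw [if_neg hj]
      have : ¬ (g j ≠ none) := by
        rw [← hT] at hj
        intro hc
        exact hj (Finset.mem_filter.2 ⟨Finset.mem_univ _, hc⟩)
      rw [Finset.mem_singleton]
      exact not_not.1 this
  calc (univ.filter _).card
      ≤ (Fintype.piFinset (fun j => if j ∈ T then Opts else ({none} : Finset (Option (Y × Y))))).card :=
        Finset.card_le_card hsubset
    _ = ∏ j : Fin n, (if j ∈ T then Opts else ({none} : Finset (Option (Y × Y)))).card :=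
        Fintype.card_piFinset _
    _ = ∏ j : Fin n, (if j ∈ T then Opts.card else 1) := by
        apply Finset.prod_congr rfl
        intro j _
        by_cases hj : j ∈ T
        · rw [if_pos hj, if_pos hj]
        · rw [if_neg hj, if_neg hj, Finset.card_singleton]
    _ = Opts.card ^ T.card := by
        rw [Finset.prod_ite_mem univ T (fun _ => Opts.card), Finset.univ_inter,
          Finset.prod_const]
    _ = (X.card * (Fintype.card Y - 1)) ^ T.card := by rw [hOptscard]

lemma card_badpairs (hX : X.Nonempty) :
    ((univ : Finset (Y × Y)).filter (fun q => q.1 ∈ X ∧ q.2 ≠ q.1)).card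
      = X.card * (Fintype.card Y - 1) := by
  classical
  have hset : (univ : Finset (Y × Y)).filter (fun q => q.1 ∈ X ∧ q.2 ≠ q.1)
      = X.biUnion (fun a => {a} ×ˢ (univ.erase a)) := by
    ext ⟨a, b⟩
    simp only [Finset.mem_filter, Finset.mem_biUnion, Finset.mem_product,
      Finset.mem_singleton, Finset.mem_erase, Finset.mem_univ, and_true, true_and]
    constructor
    · rintro ⟨ha, hba⟩
      exact ⟨a, ha, rfl, hba⟩
    · rintro ⟨a', ha', rfl, hba⟩
      exact ⟨ha', hba⟩
  rw [hset, Finset.card_biUnion]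
  · have h1 : ∀ a ∈ X, ({a} ×ˢ (univ.erase a)).card = Fintype.card Y - 1 := by
      intro a _
      rw [Finset.card_product, Finset.card_singleton, one_mul,
        Finset.card_erase_of_mem (Finset.mem_univ a), Finset.card_univ]
    rw [Finset.sum_congr rfl h1, Finset.sum_const, smul_eq_mul]
  · intro a ha a' ha' hne
    simp only [Function.onFun]
    rw [Finset.disjoint_left]
    rintro ⟨u, v⟩ hu hv
    have h1 : u = a := by
      have := (Finset.mem_product.1 (by exact_mod_cast hu)).1
      simpa using this
    have h2 : u = a' := by
      have := (Finset.mem_product.1 (by exact_mod_cast hv)).1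
      simpa using this
    exact hne (h1 ▸ h2 ▸ rfl)

lemma bnd_le_prod (hε0 : 0 ≤ ε) {n : ℕ} (g : Fin n → Option (Y × Y)) :
    (if (∀ j q, g j = some q → q.1 ∈ X ∧ q.2 ≠ q.1) then
        ε ^ ((univ.filter (fun j => g j ≠ none)).card)
          * Real.exp (((n - (univ.filter (fun j => g j ≠ none)).card : ℕ) : ℝ) * Csp X W)
      else 0)
    ≤ ∏ j, (g j).elim (Real.exp (Csp X W))
        (fun q => if q.1 ∈ X ∧ q.2 ≠ q.1 then ε else 0) := by
  classical
  set h : Option (Y × Y) → ℝ :=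
    fun o => o.elim (Real.exp (Csp X W)) (fun q => if q.1 ∈ X ∧ q.2 ≠ q.1 then ε else 0)
    with hh
  have hnn : ∀ o, 0 ≤ h o := by
    intro o
    rcases o with _ | q
    · exact (Real.exp_pos _).le
    · simp only [hh, Option.elim]
      by_cases hq : q.1 ∈ X ∧ q.2 ≠ q.1
      · rw [if_pos hq]; exact hε0
      · rw [if_neg hq]
  by_cases hg : ∀ j q, g j = some q → q.1 ∈ X ∧ q.2 ≠ q.1
  · rw [if_pos hg]
    have hsplit : ∏ j, h (g j) =
        (∏ j ∈ univ.filter (fun j => g j ≠ none), h (g j)) *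
          (∏ j ∈ univ.filter (fun j => ¬ g j ≠ none), h (g j)) :=
      (Finset.prod_filter_mul_prod_filter_not univ _ _).symm
    have h1 : ∏ j ∈ univ.filter (fun j => g j ≠ none), h (g j)
        = ε ^ ((univ.filter (fun j => g j ≠ none)).card) := by
      rw [← Finset.prod_const]
      apply Finset.prod_congr rfl
      intro j hj
      obtain ⟨q, hq⟩ := Option.ne_none_iff_exists'.1 (Finset.mem_filter.1 hj).2
      rw [hq]
      simp only [hh, Option.elim]
      rw [if_pos (hg j q hq)]
    have h2 : ∏ j ∈ univ.filter (fun j => ¬ g j ≠ none), h (g j)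
        = Real.exp (Csp X W) ^ (n - (univ.filter (fun j => g j ≠ none)).card) := by
      have hc : (univ.filter (fun j => ¬ g j ≠ none)).card
          = n - (univ.filter (fun j => g j ≠ none)).card := by
        have := Finset.card_filter_add_card_filter_not
          (s := (univ : Finset (Fin n))) (p := fun j => g j ≠ none)
        rw [Finset.card_univ, Fintype.card_fin] at this
        omega
      rw [← hc, ← Finset.prod_const]
      apply Finset.prod_congr rfl
      intro j hj
      have hnone : g j = none := not_not.1 (Finset.mem_filter.1 hj).2
      rw [hnone]
      rfl
    rw [hsplit, h1, h2, Real.exp_nat_mul]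
  · rw [if_neg hg]
    exact Finset.prod_nonneg (fun j _ => hnn (g j))

lemma sum_prod_eq (hX : X.Nonempty) (hε0 : 0 ≤ ε) {n : ℕ} :
    ∑ g : Fin n → Option (Y × Y), ∏ j, (g j).elim (Real.exp (Csp X W))
        (fun q => if q.1 ∈ X ∧ q.2 ≠ q.1 then ε else 0)
      = (Real.exp (Csp X W) + ε * X.card * ((Fintype.card Y : ℝ) - 1)) ^ n := by
  classical
  have hY1 : 1 ≤ Fintype.card Y := Fintype.card_pos_iff.2 ⟨hX.choose⟩
  have hps := Finset.prod_univ_sum (fun _ : Fin n => (univ : Finset (Option (Y × Y))))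
    (fun _ o => o.elim (Real.exp (Csp X W))
      (fun q => if q.1 ∈ X ∧ q.2 ≠ q.1 then ε else 0))
  rw [Fintype.piFinset_univ] at hps
  rw [← hps, Finset.prod_const, Finset.card_univ, Fintype.card_fin]
  congr 1
  rw [Fintype.sum_option]
  simp only [Option.elim]
  congr 1
  rw [← Finset.sum_filter, Finset.sum_const, card_badpairs hX, nsmul_eq_mul]
  push_cast [Nat.cast_sub hY1]
  ring

theorem sum_ratio_le_pow_aux (hX : X.Nonempty)
    (hε0 : 0 ≤ ε) (hε1 : ε < 1)
    (hW0 : ∀ x ∈ X, ∀ y, 0 ≤ W x y)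
    (hW1 : ∀ x ∈ X, ∑ y, W x y = 1)
    (hnoise : ∀ x ∈ X, 1 - ε ≤ W x x)
    (n : ℕ) (hn : 1 ≤ n) (P : (Fin n → Y) → ℝ)
    (hP0 : ∀ x, 0 ≤ P x) (hP1 : ∑ x, P x = 1)
    (hPX : ∀ x, P x ≠ 0 → ∀ j, x j ∈ X)
    (hPunif : ∀ x, P x ≠ 0 →
      P x = 1 / ((Finset.univ.filter (fun x' : Fin n → Y => P x' ≠ 0)).card : ℝ)) :
    ∑ y ∈ Finset.univ.filter (fun y : Fin n → Y => 0 < ∑ x, P x * Wn W n x y),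
        (∑ x, P x * Wn W n x y) /
          (∑ x ∈ Finset.univ.filter (fun x : Fin n → Y => 0 < Wn W n x y), P x)
      ≤ (Real.exp (Csp X W) + ε * X.card * (Fintype.card Y - 1)) ^ n := by
  classical
  have hY1 : 1 ≤ Fintype.card Y := Fintype.card_pos_iff.2 ⟨hX.choose⟩
  set S : Finset (Fin n → Y) := univ.filter (fun x => P x ≠ 0) with hS
  set N := S.card with hN
  have hNpos : 0 < N := by
    rcases Nat.eq_zero_or_pos N with h | h
    · exfalso
      have hSe : S = ∅ := Finset.card_eq_zero.1 h
      have : (1 : ℝ) = ∑ x ∈ S, P x := by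
        rw [hS, Finset.sum_filter_ne_zero, hP1]
      rw [hSe] at this
      simp at this
    · exact h
  have hNne : ((N : ℝ)) ≠ 0 := by
    exact_mod_cast Nat.pos_iff_ne_zero.1 hNpos
  have hPx : ∀ x, P x ≠ 0 → P x = (N : ℝ)⁻¹ := by
    intro x hx
    rw [hPunif x hx, one_div]
  -- the inner set
  set B : (Fin n → Y) → Finset (Fin n → Y) :=
    fun y => univ.filter (fun x => P x ≠ 0 ∧ 0 < Wn W n x y) with hB
  have hnum : ∀ y, (∑ x, P x * Wn W n x y) = (N : ℝ)⁻¹ * ∑ x ∈ B y, Wn W n x y := by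
    intro y
    have h1 : ∑ x ∈ B y, P x * Wn W n x y = ∑ x, P x * Wn W n x y := by
      apply Finset.sum_subset (Finset.subset_univ _)
      intro x _ hxB
      by_cases hPxz : P x = 0
      · rw [hPxz, zero_mul]
      · have hWnz : ¬ 0 < Wn W n x y := by
          intro hc
          exact hxB (Finset.mem_filter.2 ⟨Finset.mem_univ _, hPxz, hc⟩)
        have : Wn W n x y = 0 :=
          le_antisymm (not_lt.1 hWnz) (Wn_nonneg_s19 hW0 (hPX x hPxz) y)
        rw [this, mul_zero]
    rw [← h1, Finset.mul_sum]
    apply Finset.sum_congr rfl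
    intro x hx
    rw [hPx x (Finset.mem_filter.1 hx).2.1]
  have hden : ∀ y, (∑ x ∈ univ.filter (fun x => 0 < Wn W n x y), P x)
      = ((B y).card : ℝ) * (N : ℝ)⁻¹ := by
    intro y
    have hsub : B y ⊆ univ.filter (fun x => 0 < Wn W n x y) := by
      intro x hx
      exact Finset.mem_filter.2 ⟨Finset.mem_univ _, (Finset.mem_filter.1 hx).2.2⟩
    have h1 : ∑ x ∈ B y, P x = ∑ x ∈ univ.filter (fun x => 0 < Wn W n x y), P x := by
      apply Finset.sum_subset hsub
      intro x hx hxB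
      by_contra hPxz
      exact hxB (Finset.mem_filter.2 ⟨Finset.mem_univ _, hPxz, (Finset.mem_filter.1 hx).2⟩)
    rw [← h1]
    have h2 : ∑ x ∈ B y, P x = ∑ _x ∈ B y, (N : ℝ)⁻¹ :=
      Finset.sum_congr rfl (fun x hx => hPx x (Finset.mem_filter.1 hx).2.1)
    rw [h2, Finset.sum_const, nsmul_eq_mul]
  have hterm : ∀ y, 0 < (∑ x, P x * Wn W n x y) →
      (∑ x, P x * Wn W n x y) /
          (∑ x ∈ univ.filter (fun x => 0 < Wn W n x y), P x)
        = ∑ x ∈ B y, Wn W n x y / ((B y).card : ℝ) := by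
    intro y hy
    have hBcard : (0 : ℝ) < ((B y).card : ℝ) := by
      rcases Finset.eq_empty_or_nonempty (B y) with hBe | hBne
      · exfalso
        rw [hnum y, hBe] at hy
        simp at hy
      · exact_mod_cast Finset.card_pos.2 hBne
    rw [hnum y, hden y, mul_comm ((B y).card : ℝ) (N : ℝ)⁻¹,
      mul_div_mul_left _ _ (inv_ne_zero hNne), Finset.sum_div]
  calc ∑ y ∈ univ.filter (fun y : Fin n → Y => 0 < ∑ x, P x * Wn W n x y),
        (∑ x, P x * Wn W n x y) /
          (∑ x ∈ univ.filter (fun x : Fin n → Y => 0 < Wn W n x y), P x)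
      = ∑ y ∈ univ.filter (fun y : Fin n → Y => 0 < ∑ x, P x * Wn W n x y),
          ∑ x ∈ B y, Wn W n x y / ((B y).card : ℝ) := by
        apply Finset.sum_congr rfl
        intro y hy
        exact hterm y (Finset.mem_filter.1 hy).2
    _ ≤ ∑ y ∈ univ.filter (fun y : Fin n → Y => 0 < ∑ x, P x * Wn W n x y),
          ∑ x ∈ B y, ε ^ ((univ.filter (fun j => x j ≠ y j)).card) / ((B y).card : ℝ) := by
        apply Finset.sum_le_sum
        intro y _
        apply Finset.sum_le_sum
        intro x hx
        have hxS : P x ≠ 0 := (Finset.mem_filter.1 hx).2.1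
        have hWle := Wn_le_eps_pow hε0 hW0 hW1 hnoise (hPX x hxS) y
        gcongr
    _ ≤ ∑ y : Fin n → Y,
          ∑ x ∈ B y, ε ^ ((univ.filter (fun j => x j ≠ y j)).card) / ((B y).card : ℝ) := by
        apply Finset.sum_le_sum_of_subset_of_nonneg (Finset.filter_subset _ _)
        intro y _ _
        apply Finset.sum_nonneg
        intro x _
        positivity
    _ ≤ (Real.exp (Csp X W) + ε * X.card * (Fintype.card Y - 1)) ^ n := ?_
  -- pairs
  set F : ((Fin n → Y) × (Fin n → Y)) → ℝ :=
    fun p => ε ^ ((univ.filter (fun j => p.1 j ≠ p.2 j)).card) / ((B p.2).card : ℝ) with hF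
  set Pairs : Finset ((Fin n → Y) × (Fin n → Y)) :=
    (univ ×ˢ univ).filter (fun p => P p.1 ≠ 0 ∧ 0 < Wn W n p.1 p.2) with hPairs
  have hpairs : ∑ y : Fin n → Y,
      ∑ x ∈ B y, ε ^ ((univ.filter (fun j => x j ≠ y j)).card) / ((B y).card : ℝ)
      = ∑ p ∈ Pairs, F p := by
    have h1 : ∀ y : Fin n → Y,
        ∑ x ∈ B y, ε ^ ((univ.filter (fun j => x j ≠ y j)).card) / ((B y).card : ℝ)
        = ∑ x : Fin n → Y, if (P x ≠ 0 ∧ 0 < Wn W n x y) then F (x, y) else 0 := by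
      intro y
      rw [hB]
      rw [Finset.sum_filter]
    rw [Finset.sum_congr rfl (fun y _ => h1 y), Finset.sum_comm]
    rw [hPairs, Finset.sum_filter]
    rw [Finset.sum_product]
  rw [hpairs]
  -- keys
  set key : ((Fin n → Y) × (Fin n → Y)) → (Fin n → Option (Y × Y)) :=
    fun p j => if p.1 j = p.2 j then none else some (p.1 j, p.2 j) with hkey
  have hfib : ∑ p ∈ Pairs, F p
      = ∑ g : Fin n → Option (Y × Y), ∑ p ∈ Pairs.filter (fun p => key p = g), F p :=
    (Finset.sum_fiberwise Pairs key F).symm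
  rw [hfib]
  have hclaim5 : ∀ g : Fin n → Option (Y × Y),
      ∑ p ∈ Pairs.filter (fun p => key p = g), F p ≤
        (if (∀ j q, g j = some q → q.1 ∈ X ∧ q.2 ≠ q.1) then
          ε ^ ((univ.filter (fun j => g j ≠ none)).card)
            * Real.exp (((n - (univ.filter (fun j => g j ≠ none)).card : ℕ) : ℝ) * Csp X W)
        else 0) := by
    intro g
    set Fg := Pairs.filter (fun p => key p = g) with hFg
    rcases Finset.eq_empty_or_nonempty Fg with hFe | hFne
    · rw [hFe]
      simp only [Finset.sum_empty]
      by_cases hg : ∀ j q, g j = some q → q.1 ∈ X ∧ q.2 ≠ q.1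
      · rw [if_pos hg]; positivity
      · rw [if_neg hg]
    · obtain ⟨p0, hp0⟩ := hFne
      have hmem : ∀ p ∈ Fg, (P p.1 ≠ 0 ∧ 0 < Wn W n p.1 p.2) ∧ key p = g := by
        intro p hp
        obtain ⟨hp1, hp2⟩ := Finset.mem_filter.1 hp
        exact ⟨(Finset.mem_filter.1 hp1).2, hp2⟩
      have hfkey : ∀ p ∈ Fg, ∀ j : Fin n,
          (g j = none → p.1 j = p.2 j) ∧
          (∀ q, g j = some q → p.1 j = q.1 ∧ p.2 j = q.2 ∧ p.1 j ≠ p.2 j) := by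
        intro p hp j
        have hkj : (if p.1 j = p.2 j then none else some (p.1 j, p.2 j)) = g j :=
          congrFun (hmem p hp).2 j
        by_cases hcase : p.1 j = p.2 j
        · rw [if_pos hcase] at hkj
          constructor
          · intro _; exact hcase
          · intro q hq; rw [← hkj] at hq; exact absurd hq (by simp)
        · rw [if_neg hcase] at hkj
          constructor
          · intro hnone; rw [← hkj] at hnone; exact absurd hnone (by simp)
          · intro q hq
            rw [← hkj] at hq
            have := Option.some_injective _ hq
            rw [← this]
            exact ⟨rfl, rfl, hcase⟩
      have hgoodg : ∀ j q, g j = some q → q.1 ∈ X ∧ q.2 ≠ q.1 := by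
        intro j q hq
        obtain ⟨h1, h2, h3⟩ := (hfkey p0 hp0 j).2 q hq
        refine ⟨?_, ?_⟩
        · rw [← h1]; exact hPX _ (hmem p0 hp0).1.1 j
        · rw [← h1, ← h2]; exact fun hc => h3 hc.symm
      have hd : ∀ p ∈ Fg, (univ.filter (fun j => p.1 j ≠ p.2 j)).card
          = (univ.filter (fun j => g j ≠ none)).card := by
        intro p hp
        congr 1
        apply Finset.filter_congr
        intro j _
        constructor
        · intro hne
          intro hnone
          exact hne ((hfkey p hp j).1 hnone)
        · intro hgne
          obtain ⟨q, hq⟩ := Option.ne_none_iff_exists'.1 hgne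
          exact ((hfkey p hp j).2 q hq).2.2
      set Ψ : (Fin n → Y) → (Fin n → Y) :=
        fun x j => (g j).elim (x j) (fun q => q.2) with hΨ
      have hΨp : ∀ p ∈ Fg, p.2 = Ψ p.1 := by
        intro p hp
        funext j
        rcases hgj : g j with _ | q
        · rw [hΨ]
          simp only [hgj, Option.elim]
          exact ((hfkey p hp j).1 hgj).symm
        · rw [hΨ]
          simp only [hgj, Option.elim]
          exact ((hfkey p hp j).2 q hgj).2.1
      have hinj1 : ∀ p ∈ Fg, ∀ p' ∈ Fg, p.1 = p'.1 → p = p' := by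
        intro p hp p' hp' h1
        have h2 : p.2 = p'.2 := by
          rw [hΨp p hp, hΨp p' hp', h1]
        exact Prod.ext h1 h2
      set U := Fg.image Prod.fst with hU
      have hUfacts : ∀ x ∈ U, P x ≠ 0 ∧ 0 < Wn W n x (Ψ x) := by
        intro x hx
        obtain ⟨p, hp, rfl⟩ := Finset.mem_image.1 hx
        refine ⟨(hmem p hp).1.1, ?_⟩
        have := (hmem p hp).1.2
        rwa [hΨp p hp] at this
      have hUX : ∀ x ∈ U, ∀ j, x j ∈ X :=
        fun x hx j => hPX x (hUfacts x hx).1 j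
      have hUq : ∀ x ∈ U, ∀ j q, g j = some q → x j = q.1 := by
        intro x hx j q hq
        obtain ⟨p, hp, rfl⟩ := Finset.mem_image.1 hx
        exact ((hfkey p hp j).2 q hq).1
      -- sum over the fiber = sum over U
      have hsum1 : ∑ p ∈ Fg, F p = ε ^ ((univ.filter (fun j => g j ≠ none)).card)
          * ∑ x ∈ U, ((B (Ψ x)).card : ℝ)⁻¹ := by
        rw [hU, Finset.sum_image hinj1, Finset.mul_sum]
        apply Finset.sum_congr rfl
        intro p hp
        simp only [hF]
        rw [hd p hp, ← hΨp p hp, div_eq_mul_inv]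
      -- relating B (Ψ x) to the local in-neighborhoods
      have hDsub : ∀ x ∈ U, U.filter (fun x' => 0 < Wn W n x' x) ⊆ B (Ψ x) := by
        intro x hx x' hx'
        obtain ⟨hx'U, hx'W⟩ := Finset.mem_filter.1 hx'
        refine Finset.mem_filter.2 ⟨Finset.mem_univ _, (hUfacts x' hx'U).1, ?_⟩
        -- 0 < Wn W n x' (Ψ x)
        have hdec : ∀ a b : Fin n → Y, Wn W n a b =
            (∏ j ∈ univ.filter (fun j => g j ≠ none), W (a j) (b j)) *
              (∏ j ∈ univ.filter (fun j => ¬ g j ≠ none), W (a j) (b j)) :=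
          fun a b => (Finset.prod_filter_mul_prod_filter_not univ _ _).symm
        have hnn : ∀ b : Fin n → Y, ∀ (s : Finset (Fin n)), 0 ≤ ∏ j ∈ s, W (x' j) (b j) :=
          fun b s => Finset.prod_nonneg (fun j _ => hW0 _ (hUX x' hx'U j) _)
        -- the "some" part of Wn x' (Ψ x) equals the "some" part of Wn x' (Ψ x')
        have hsome_eq : ∀ z ∈ U, (∏ j ∈ univ.filter (fun j => g j ≠ none), W (x' j) (Ψ z j))
            = ∏ j ∈ univ.filter (fun j => g j ≠ none), W (x' j) (Ψ x j) := by
          intro z hz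
          apply Finset.prod_congr rfl
          intro j hj
          obtain ⟨q, hq⟩ := Option.ne_none_iff_exists'.1 (Finset.mem_filter.1 hj).2
          rw [hΨ]
          simp only [hq, Option.elim]
        -- positivity of the "some" part
        have hsomepos : 0 < ∏ j ∈ univ.filter (fun j => g j ≠ none), W (x' j) (Ψ x j) := by
          have hx'W2 : 0 < Wn W n x' (Ψ x') := (hUfacts x' hx'U).2
          rw [hdec x' (Ψ x')] at hx'W2
          rw [← hsome_eq x' hx'U]
          rcases mul_pos_iff.1 hx'W2 with ⟨hA, _⟩ | ⟨hA, _⟩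
          · exact hA
          · exact absurd hA (not_lt.2 (hnn _ _))
        -- positivity of the "none" part
        have hnone_eq : (∏ j ∈ univ.filter (fun j => ¬ g j ≠ none), W (x' j) (Ψ x j))
            = ∏ j ∈ univ.filter (fun j => ¬ g j ≠ none), W (x' j) (x j) := by
          apply Finset.prod_congr rfl
          intro j hj
          have hnone : g j = none := not_not.1 (Finset.mem_filter.1 hj).2
          rw [hΨ]
          simp only [hnone, Option.elim]
        have hnonepos : 0 < ∏ j ∈ univ.filter (fun j => ¬ g j ≠ none), W (x' j) (x j) := by
          have := hx'W
          rw [hdec x' x] at this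
          rcases mul_pos_iff.1 this with ⟨_, hBp⟩ | ⟨_, hBp⟩
          · exact hBp
          · exact absurd hBp (not_lt.2 (hnn _ _))
        rw [hdec x' (Ψ x), hnone_eq]
        exact mul_pos hsomepos hnonepos
      have hxD : ∀ x ∈ U, x ∈ U.filter (fun x' => 0 < Wn W n x' x) := by
        intro x hx
        exact Finset.mem_filter.2 ⟨hx, Wn_diag_pos hε1 hnoise (fun j => hUX x hx j)⟩
      have hsum2 : ∑ x ∈ U, ((B (Ψ x)).card : ℝ)⁻¹
          ≤ ∑ x ∈ U, ((U.filter (fun x' => 0 < Wn W n x' x)).card : ℝ)⁻¹ := by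
        apply Finset.sum_le_sum
        intro x hx
        have hpos : 0 < ((U.filter (fun x' => 0 < Wn W n x' x)).card : ℝ) := by
          exact_mod_cast Finset.card_pos.2 ⟨x, hxD x hx⟩
        apply inv_anti₀ hpos
        exact_mod_cast Finset.card_le_card (hDsub x hx)
      have hsum3 := transport_bound hX hε1 hW0 hnoise g U hUX hUq
      -- combine
      calc ∑ p ∈ Fg, F p = ε ^ ((univ.filter (fun j => g j ≠ none)).card)
            * ∑ x ∈ U, ((B (Ψ x)).card : ℝ)⁻¹ := hsum1
        _ ≤ ε ^ ((univ.filter (fun j => g j ≠ none)).card)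
            * Real.exp (((n - (univ.filter (fun j => g j ≠ none)).card : ℕ) : ℝ) * Csp X W) := by
            apply mul_le_mul_of_nonneg_left _ (pow_nonneg hε0 _)
            exact le_trans hsum2 hsum3
        _ = _ := (if_pos hgoodg).symm
  calc ∑ g : Fin n → Option (Y × Y), ∑ p ∈ Pairs.filter (fun p => key p = g), F p
      ≤ ∑ g : Fin n → Option (Y × Y),
          (if (∀ j q, g j = some q → q.1 ∈ X ∧ q.2 ≠ q.1) then
            ε ^ ((univ.filter (fun j => g j ≠ none)).card)
              * Real.exp (((n - (univ.filter (fun j => g j ≠ none)).card : ℕ) : ℝ) * Csp X W)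
          else 0) := Finset.sum_le_sum (fun g _ => hclaim5 g)
    _ ≤ ∑ g : Fin n → Option (Y × Y), ∏ j, (g j).elim (Real.exp (Csp X W))
          (fun q => if q.1 ∈ X ∧ q.2 ≠ q.1 then ε else 0) :=
        Finset.sum_le_sum (fun g _ => bnd_le_prod hε0 g)
    _ = (Real.exp (Csp X W) + ε * X.card * ((Fintype.card Y : ℝ) - 1)) ^ n :=
        sum_prod_eq hX hε0

end Aux

/-- For an `ε`-noise channel `W` and any PMF `P` on `Xⁿ` that is uniform over
its support,
`∑_{y ∈ supp(PWⁿ)} (PWⁿ)(y) / P(Xⁿ(y)) ≤ (e^{C_sp} + ε |X| (|Y|-1))ⁿ`. -/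
theorem sum_ratio_le_pow {Y : Type*} [Fintype Y] (X : Finset Y) (hX : X.Nonempty)
    (W : Y → Y → ℝ) (ε : ℝ) (hε0 : 0 ≤ ε) (hε1 : ε < 1)
    (hW0 : ∀ x ∈ X, ∀ y, 0 ≤ W x y)
    (hW1 : ∀ x ∈ X, ∑ y, W x y = 1)
    (hnoise : ∀ x ∈ X, 1 - ε ≤ W x x)
    (n : ℕ) (hn : 1 ≤ n) (P : (Fin n → Y) → ℝ)
    (hP0 : ∀ x, 0 ≤ P x) (hP1 : ∑ x, P x = 1)
    (hPX : ∀ x, P x ≠ 0 → ∀ j, x j ∈ X)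
    (hPunif : ∀ x, P x ≠ 0 →
      P x = 1 / ((Finset.univ.filter (fun x' : Fin n → Y => P x' ≠ 0)).card : ℝ)) :
    ∑ y ∈ Finset.univ.filter (fun y : Fin n → Y => 0 < ∑ x, P x * Wn W n x y),
        (∑ x, P x * Wn W n x y) /
          (∑ x ∈ Finset.univ.filter (fun x : Fin n → Y => 0 < Wn W n x y), P x)
      ≤ (Real.exp (Csp X W) + ε * X.card * (Fintype.card Y - 1)) ^ n := by
  exact sum_ratio_le_pow_aux hX hε0 hε1 hW0 hW1 hnoise n hn P hP0 hP1 hPX hPunif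
end
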